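/- arXiv:2506.01509 — 6 statements merged into one kernel-verified Lean document; each statement's English description precedes it below -/
import Mathlib

section
/- Every extreme point of the polyhedron Q (the feasible region of the dual of the auxiliary maximum flow LP) has all coordinates integral. -/
/-- A finite graph: a finite vertex set and a finite set of (oriented representatives of) edges. -/
structure FinGraph (α : Type*) where
  verts : Finset α
  edges : Finset (α × α)

namespace FinGraph

variable {α : Type*}

/-- A matching: a set of edges of `G` that are pairwise vertex-disjoint. -/
def IsMatching (G : FinGraph α) (M : Finset (α × α)) : Prop :=
  M ⊆ G.edges ∧ ∀ e ∈ M, ∀ f ∈ M, e ≠ f →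
    e.1 ≠ f.1 ∧ e.1 ≠ f.2 ∧ e.2 ≠ f.1 ∧ e.2 ≠ f.2

open Classical in
/-- `ν(G)`: the maximum cardinality of a matching of `G`. -/
noncomputable def nu (G : FinGraph α) : ℕ :=
  (G.edges.powerset.filter fun M => G.IsMatching M).sup Finset.card

/-- Well-formedness: edges join two distinct vertices of the graph. -/
def WF (G : FinGraph α) : Prop :=
  ∀ e ∈ G.edges, e.1 ∈ G.verts ∧ e.2 ∈ G.verts ∧ e.1 ≠ e.2

/-- `G` is bipartite with parts `V1`, `V2` (edges oriented from `V1` to `V2`). -/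
def Bipartition [DecidableEq α] (G : FinGraph α) (V1 V2 : Finset α) : Prop :=
  G.verts ⊆ V1 ∪ V2 ∧ ∀ e ∈ G.edges, e.1 ∈ V1 ∧ e.2 ∈ V2

/-- The core of the assignment game on `G`: minimum fractional vertex covers of value `ν(G)`. -/
noncomputable def core (G : FinGraph α) : Set (α → ℝ) :=
  {y | (∀ v ∈ G.verts, 0 ≤ y v) ∧ (∀ e ∈ G.edges, 1 ≤ y e.1 + y e.2) ∧
    ∑ v ∈ G.verts, y v = (G.nu : ℝ)}

/-- The subgraph of `G` induced by the vertex set `U`. -/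
def induce [DecidableEq α] (G : FinGraph α) (U : Finset α) : FinGraph α :=
  ⟨G.verts ∩ U, G.edges.filter fun e => e.1 ∈ U ∧ e.2 ∈ U⟩

end FinGraph

/-- A real number is integral if it is an integer. -/
def IntegralReal (x : ℝ) : Prop := ∃ n : ℤ, x = (n : ℝ)

open FinGraph

variable {α σ : Type*}

/-- A point of the two-stage LP: first-stage allocation `y`, second-stage allocations `y^S`,
and deviation variables `δ^S`, `d^S`. -/
abbrev TwoStagePt (α σ : Type*) : Type _ :=
  (α → ℝ) × (σ → α → ℝ) × (σ → α → ℝ) × (σ → α → ℝ)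

/-- The relaxed feasible region `D` of the two-stage LP (no matching-number equalities). -/
def regionD [DecidableEq α] (G0 : FinGraph α) (G : σ → FinGraph α) :
    Set (TwoStagePt α σ) :=
  {p | (∀ v ∈ G0.verts, 0 ≤ p.1 v) ∧
       (∀ e ∈ G0.edges, 1 ≤ p.1 e.1 + p.1 e.2) ∧
       (∀ s : σ, (∀ v ∈ (G s).verts, 0 ≤ p.2.1 s v) ∧
         (∀ e ∈ (G s).edges, 1 ≤ p.2.1 s e.1 + p.2.1 s e.2)) ∧
       (∀ s : σ, ∀ v ∈ G0.verts ∩ (G s).verts,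
         p.1 v - p.2.1 s v ≤ p.2.2.1 s v ∧ p.2.1 s v - p.1 v ≤ p.2.2.2 s v ∧
         0 ≤ p.2.2.1 s v ∧ 0 ≤ p.2.2.2 s v)}

/-- The feasible region `P` of (2SAG-LP): `D` together with the matching-number equalities. -/
noncomputable def regionP [DecidableEq α] (G0 : FinGraph α) (G : σ → FinGraph α) :
    Set (TwoStagePt α σ) :=
  {p ∈ regionD G0 G |
    (∑ v ∈ G0.verts, p.1 v = (G0.nu : ℝ)) ∧
    ∀ s : σ, ∑ v ∈ (G s).verts, p.2.1 s v = ((G s).nu : ℝ)}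

/-- The dual-flow polyhedron `Q`: points of `D` extended by potentials `γ`, `γ^S`. -/
def regionQ [DecidableEq α] (G0 : FinGraph α) (G : σ → FinGraph α) (V1 V2 : Finset α) :
    Set (TwoStagePt α σ × ((α → ℝ) × (σ → α → ℝ))) :=
  {q | (∀ v ∈ G0.verts ∩ V1, 1 ≤ q.2.1 v + q.1.1 v) ∧
       (∀ s : σ, ∀ v ∈ (G s).verts ∩ V1, 1 ≤ q.2.2 s v + q.1.2.1 s v) ∧
       (∀ s : σ, ∀ v ∈ (G0.verts ∩ (G s).verts) ∩ V1,
          0 ≤ q.2.1 v - q.2.2 s v + q.1.2.2.1 s v ∧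
          0 ≤ q.2.2 s v - q.2.1 v + q.1.2.2.2 s v) ∧
       (∀ e ∈ G0.edges, e.1 ∈ V1 → e.2 ∈ V2 → 0 ≤ q.2.1 e.2 - q.2.1 e.1) ∧
       (∀ s : σ, ∀ e ∈ (G s).edges, e.1 ∈ V1 → e.2 ∈ V2 →
          0 ≤ q.2.2 s e.2 - q.2.2 s e.1) ∧
       (∀ v ∈ G0.verts ∩ V2, 0 ≤ q.1.1 v - q.2.1 v) ∧
       (∀ s : σ, ∀ v ∈ (G s).verts ∩ V2, 0 ≤ q.1.2.1 s v - q.2.2 s v) ∧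
       (∀ s : σ, ∀ v ∈ (G0.verts ∩ (G s).verts) ∩ V2,
          0 ≤ q.2.2 s v - q.2.1 v + q.1.2.2.1 s v ∧
          0 ≤ q.2.1 v - q.2.2 s v + q.1.2.2.2 s v) ∧
       (∀ v ∈ G0.verts, 0 ≤ q.1.1 v) ∧
       (∀ s : σ, ∀ v ∈ (G s).verts, 0 ≤ q.1.2.1 s v) ∧
       (∀ s : σ, ∀ v ∈ G0.verts ∩ (G s).verts,
          0 ≤ q.1.2.2.1 s v ∧ 0 ≤ q.1.2.2.2 s v)}

/-- A linear objective on the `(y, y^S, δ^S, d^S)` variables, with coefficient functions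
`cy`, `cyS`, `cδ`, `cd`. -/
def objC [DecidableEq α] [Fintype σ] (G0 : FinGraph α) (G : σ → FinGraph α)
    (cy : α → ℝ) (cyS cδ cd : σ → α → ℝ) (p : TwoStagePt α σ) : ℝ :=
  ∑ v ∈ G0.verts, cy v * p.1 v
    + ∑ s : σ, ∑ v ∈ (G s).verts, cyS s v * p.2.1 s v
    + ∑ s : σ, ∑ v ∈ G0.verts ∩ (G s).verts,
        (cδ s v * p.2.2.1 s v + cd s v * p.2.2.2 s v)

/-- The dual-flow polyhedron `Q`, embedded in the ambient product space by requiring all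
variables to vanish outside their index sets (`y, γ ∈ ℝ^{V₀}`, `y^S, γ^S ∈ ℝ^{V_S}`,
`δ^S, d^S ∈ ℝ^{V₀ ∩ V_S}`). -/
def regionQemb [DecidableEq α] (G0 : FinGraph α) (G : σ → FinGraph α) (V1 V2 : Finset α) :
    Set (TwoStagePt α σ × ((α → ℝ) × (σ → α → ℝ))) :=
  {q ∈ regionQ G0 G V1 V2 |
    (∀ v ∉ G0.verts, q.1.1 v = 0 ∧ q.2.1 v = 0) ∧
    (∀ s : σ, ∀ v ∉ (G s).verts, q.1.2.1 s v = 0 ∧ q.2.2 s v = 0) ∧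
    (∀ s : σ, ∀ v ∉ G0.verts ∩ (G s).verts, q.1.2.2.1 s v = 0 ∧ q.1.2.2.2 s v = 0)}

section Aux

lemma not_extreme_of_mid {E : Type*} [AddCommGroup E] [Module ℝ E] {A : Set E}
    {q x₁ x₂ : E} (h₁ : x₁ ∈ A) (h₂ : x₂ ∈ A) (hne : x₁ ≠ q)
    (hmid : x₁ + x₂ = q + q) : q ∉ Set.extremePoints ℝ A := by
  intro hq
  have hseg : q ∈ openSegment ℝ x₁ x₂ := by
    refine ⟨1/2, 1/2, by norm_num, by norm_num, by norm_num, ?_⟩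
    have h : ((1:ℝ)/2) • (x₁ + x₂) = ((1:ℝ)/2) • (q + q) := by rw [hmid]
    rw [smul_add, smul_add] at h
    rw [h, ← add_smul]
    norm_num
  exact hne (hq.2 h₁ h₂ hseg)

variable {α σ : Type*} [DecidableEq α]

open Classical

lemma pin_y1 (G0 : FinGraph α) (G : σ → FinGraph α) (V1 V2 : Finset α)
    (hdisj : Disjoint V1 V2)
    (y : α → ℝ) (Y : σ → α → ℝ) (D1 D2 : σ → α → ℝ) (g : α → ℝ) (gS : σ → α → ℝ)
    (hq : ((y, Y, D1, D2), (g, gS)) ∈ Set.extremePoints ℝ (regionQemb G0 G V1 V2)) :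
    ∀ v ∈ G0.verts ∩ V1, y v = 0 ∨ g v + y v = 1 := by
  intro v₀ hv
  by_contra hcon
  push_neg at hcon
  obtain ⟨hy0, hty⟩ := hcon
  have hqm := hq.1
  simp only [regionQemb, regionQ, Set.mem_setOf_eq] at hqm
  obtain ⟨⟨hC1, hC2, hC3, hC4, hC5, hC6, hC7, hC8, hC9, hC10, hC11⟩, hZ1, hZ2, hZ3⟩ := hqm
  rw [Finset.mem_inter] at hv
  obtain ⟨hv0, hv1⟩ := hv
  have hv2 : v₀ ∉ V2 := fun h => (Finset.disjoint_left.mp hdisj hv1) h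
  have ypos : 0 < y v₀ := lt_of_le_of_ne (hC9 v₀ hv0) (Ne.symm hy0)
  have spos : 0 < g v₀ + y v₀ - 1 := by
    have h1 := hC1 v₀ (Finset.mem_inter.mpr ⟨hv0, hv1⟩)
    rcases lt_or_eq_of_le h1 with h | h
    · linarith
    · exact absurd h.symm hty
  set ε : ℝ := min (y v₀) (g v₀ + y v₀ - 1) with hεdef
  have hε : 0 < ε := lt_min ypos spos
  have hεy : ε ≤ y v₀ := min_le_left _ _
  have hεs : ε ≤ g v₀ + y v₀ - 1 := min_le_right _ _
  set pt : ℝ → (TwoStagePt α σ × ((α → ℝ) × (σ → α → ℝ))) := fun t =>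
    ((fun w => if w = v₀ then y w + t else y w, Y, D1, D2), (g, gS)) with hptdef
  have hmem : ∀ t : ℝ, -ε ≤ t → t ≤ ε → pt t ∈ regionQemb G0 G V1 V2 := by
    intro t ht1 ht2
    simp only [regionQemb, regionQ, Set.mem_setOf_eq, hptdef]
    refine ⟨⟨?_, hC2, hC3, hC4, hC5, ?_, hC7, hC8, ?_, hC10, hC11⟩, ?_, hZ2, hZ3⟩
    · intro v hvv
      by_cases h : v = v₀
      · subst h; rw [if_pos rfl]; linarith
      · rw [if_neg h]; exact hC1 v hvv
    · intro v hvv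
      rw [Finset.mem_inter] at hvv
      by_cases h : v = v₀
      · exact absurd hvv.2 (h ▸ hv2)
      · rw [if_neg h]; exact hC6 v (Finset.mem_inter.mpr hvv)
    · intro v hvv
      by_cases h : v = v₀
      · subst h; rw [if_pos rfl]; linarith
      · rw [if_neg h]; exact hC9 v hvv
    · intro v hvv
      refine ⟨?_, (hZ1 v hvv).2⟩
      by_cases h : v = v₀
      · exact absurd (h ▸ hv0) hvv
      · rw [if_neg h]; exact (hZ1 v hvv).1
  have hne : pt (-ε) ≠ ((y, Y, D1, D2), (g, gS)) := by
    intro h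
    have h2 := congrFun (congrArg (fun p => p.1.1) h) v₀
    simp only [hptdef] at h2
    simp at h2
    linarith
  have hmid : pt (-ε) + pt ε = ((y, Y, D1, D2), (g, gS)) + ((y, Y, D1, D2), (g, gS)) := by
    have hy : (fun w => if w = v₀ then y w + (-ε) else y w) + (fun w => if w = v₀ then y w + ε else y w) = y + y := by
      funext w
      by_cases h : w = v₀ <;> simp [h, Pi.add_apply] <;> ring
    simp only [hptdef, Prod.mk_add_mk, hy]
  exact not_extreme_of_mid (hmem (-ε) le_rfl (by linarith)) (hmem ε (by linarith) le_rfl) hne hmid hq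

lemma pin_y2 (G0 : FinGraph α) (G : σ → FinGraph α) (V1 V2 : Finset α)
    (hdisj : Disjoint V1 V2)
    (y : α → ℝ) (Y : σ → α → ℝ) (D1 D2 : σ → α → ℝ) (g : α → ℝ) (gS : σ → α → ℝ)
    (hq : ((y, Y, D1, D2), (g, gS)) ∈ Set.extremePoints ℝ (regionQemb G0 G V1 V2)) :
    ∀ v ∈ G0.verts ∩ V2, y v = 0 ∨ y v = g v := by
  intro v₀ hv
  by_contra hcon
  push_neg at hcon
  obtain ⟨hy0, hty⟩ := hcon
  have hqm := hq.1
  simp only [regionQemb, regionQ, Set.mem_setOf_eq] at hqm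
  obtain ⟨⟨hC1, hC2, hC3, hC4, hC5, hC6, hC7, hC8, hC9, hC10, hC11⟩, hZ1, hZ2, hZ3⟩ := hqm
  rw [Finset.mem_inter] at hv
  obtain ⟨hv0, hv2⟩ := hv
  have hv1 : v₀ ∉ V1 := fun h => (Finset.disjoint_left.mp hdisj h) hv2
  have ypos : 0 < y v₀ := lt_of_le_of_ne (hC9 v₀ hv0) (Ne.symm hy0)
  have spos : 0 < y v₀ - g v₀ := by
    have h1 := hC6 v₀ (Finset.mem_inter.mpr ⟨hv0, hv2⟩)
    rcases lt_or_eq_of_le h1 with h | h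
    · linarith
    · exact absurd (by linarith : y v₀ = g v₀) hty
  set ε : ℝ := min (y v₀) (y v₀ - g v₀) with hεdef
  have hε : 0 < ε := lt_min ypos spos
  have hεy : ε ≤ y v₀ := min_le_left _ _
  have hεs : ε ≤ y v₀ - g v₀ := min_le_right _ _
  set pt : ℝ → (TwoStagePt α σ × ((α → ℝ) × (σ → α → ℝ))) := fun t =>
    ((fun w => if w = v₀ then y w + t else y w, Y, D1, D2), (g, gS)) with hptdef
  have hmem : ∀ t : ℝ, -ε ≤ t → t ≤ ε → pt t ∈ regionQemb G0 G V1 V2 := by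
    intro t ht1 ht2
    simp only [regionQemb, regionQ, Set.mem_setOf_eq, hptdef]
    refine ⟨⟨?_, hC2, hC3, hC4, hC5, ?_, hC7, hC8, ?_, hC10, hC11⟩, ?_, hZ2, hZ3⟩
    · intro v hvv
      rw [Finset.mem_inter] at hvv
      by_cases h : v = v₀
      · exact absurd hvv.2 (h ▸ hv1)
      · rw [if_neg h]; exact hC1 v (Finset.mem_inter.mpr hvv)
    · intro v hvv
      by_cases h : v = v₀
      · subst h; rw [if_pos rfl]; linarith
      · rw [if_neg h]; exact hC6 v hvv
    · intro v hvv
      by_cases h : v = v₀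
      · subst h; rw [if_pos rfl]; linarith
      · rw [if_neg h]; exact hC9 v hvv
    · intro v hvv
      refine ⟨?_, (hZ1 v hvv).2⟩
      by_cases h : v = v₀
      · exact absurd (h ▸ hv0) hvv
      · rw [if_neg h]; exact (hZ1 v hvv).1
  have hne : pt (-ε) ≠ ((y, Y, D1, D2), (g, gS)) := by
    intro h
    have h2 := congrFun (congrArg (fun p => p.1.1) h) v₀
    simp only [hptdef] at h2
    simp at h2
    linarith
  have hmid : pt (-ε) + pt ε = ((y, Y, D1, D2), (g, gS)) + ((y, Y, D1, D2), (g, gS)) := by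
    have hy : (fun w => if w = v₀ then y w + (-ε) else y w) + (fun w => if w = v₀ then y w + ε else y w) = y + y := by
      funext w
      by_cases h : w = v₀ <;> simp [h, Pi.add_apply] <;> ring
    simp only [hptdef, Prod.mk_add_mk, hy]
  exact not_extreme_of_mid (hmem (-ε) le_rfl (by linarith)) (hmem ε (by linarith) le_rfl) hne hmid hq

lemma pin_Y1 (G0 : FinGraph α) (G : σ → FinGraph α) (V1 V2 : Finset α)
    (hdisj : Disjoint V1 V2)
    (y : α → ℝ) (Y : σ → α → ℝ) (D1 D2 : σ → α → ℝ) (g : α → ℝ) (gS : σ → α → ℝ)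
    (hq : ((y, Y, D1, D2), (g, gS)) ∈ Set.extremePoints ℝ (regionQemb G0 G V1 V2)) :
    ∀ (s₀ : σ), ∀ v ∈ (G s₀).verts ∩ V1, Y s₀ v = 0 ∨ gS s₀ v + Y s₀ v = 1 := by
  intro s₀ v₀ hv
  by_contra hcon
  push_neg at hcon
  obtain ⟨hy0, hty⟩ := hcon
  have hqm := hq.1
  simp only [regionQemb, regionQ, Set.mem_setOf_eq] at hqm
  obtain ⟨⟨hC1, hC2, hC3, hC4, hC5, hC6, hC7, hC8, hC9, hC10, hC11⟩, hZ1, hZ2, hZ3⟩ := hqm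
  rw [Finset.mem_inter] at hv
  obtain ⟨hv0, hv1⟩ := hv
  have hv2 : v₀ ∉ V2 := fun h => (Finset.disjoint_left.mp hdisj hv1) h
  have ypos : 0 < Y s₀ v₀ := lt_of_le_of_ne (hC10 s₀ v₀ hv0) (Ne.symm hy0)
  have spos : 0 < gS s₀ v₀ + Y s₀ v₀ - 1 := by
    have h1 := hC2 s₀ v₀ (Finset.mem_inter.mpr ⟨hv0, hv1⟩)
    rcases lt_or_eq_of_le h1 with h | h
    · linarith
    · exact absurd h.symm hty
  set ε : ℝ := min (Y s₀ v₀) (gS s₀ v₀ + Y s₀ v₀ - 1) with hεdef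
  have hε : 0 < ε := lt_min ypos spos
  have hεy : ε ≤ Y s₀ v₀ := min_le_left _ _
  have hεs : ε ≤ gS s₀ v₀ + Y s₀ v₀ - 1 := min_le_right _ _
  set pt : ℝ → (TwoStagePt α σ × ((α → ℝ) × (σ → α → ℝ))) := fun t =>
    ((y, fun s w => if s = s₀ ∧ w = v₀ then Y s w + t else Y s w, D1, D2), (g, gS)) with hptdef
  have hmem : ∀ t : ℝ, -ε ≤ t → t ≤ ε → pt t ∈ regionQemb G0 G V1 V2 := by
    intro t ht1 ht2
    simp only [regionQemb, regionQ, Set.mem_setOf_eq, hptdef]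
    refine ⟨⟨hC1, ?_, hC3, hC4, hC5, hC6, ?_, hC8, hC9, ?_, hC11⟩, hZ1, ?_, hZ3⟩
    · intro s v hvv
      by_cases h : s = s₀ ∧ v = v₀
      · obtain ⟨h1, h2⟩ := h; subst h1; subst h2; rw [if_pos ⟨rfl, rfl⟩]; linarith
      · rw [if_neg h]; exact hC2 s v hvv
    · intro s v hvv
      rw [Finset.mem_inter] at hvv
      by_cases h : s = s₀ ∧ v = v₀
      · exact absurd hvv.2 (h.2 ▸ hv2)
      · rw [if_neg h]; exact hC7 s v (Finset.mem_inter.mpr hvv)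
    · intro s v hvv
      by_cases h : s = s₀ ∧ v = v₀
      · obtain ⟨h1, h2⟩ := h; subst h1; subst h2; rw [if_pos ⟨rfl, rfl⟩]; linarith
      · rw [if_neg h]; exact hC10 s v hvv
    · intro s v hvv
      refine ⟨?_, (hZ2 s v hvv).2⟩
      by_cases h : s = s₀ ∧ v = v₀
      · exact absurd (h.2 ▸ (h.1 ▸ hvv : v ∉ (G s₀).verts)) (fun hh => hh hv0)
      · rw [if_neg h]; exact (hZ2 s v hvv).1
  have hne : pt (-ε) ≠ ((y, Y, D1, D2), (g, gS)) := by
    intro h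
    have h2 := congrFun (congrFun (congrArg (fun p => p.1.2.1) h) s₀) v₀
    simp only [hptdef] at h2
    simp at h2
    linarith
  have hmid : pt (-ε) + pt ε = ((y, Y, D1, D2), (g, gS)) + ((y, Y, D1, D2), (g, gS)) := by
    have hy : (fun s w => if s = s₀ ∧ w = v₀ then Y s w + (-ε) else Y s w) + (fun s w => if s = s₀ ∧ w = v₀ then Y s w + ε else Y s w) = Y + Y := by
      funext s w
      by_cases h : s = s₀ ∧ w = v₀ <;> simp [h, Pi.add_apply] <;> ring
    simp only [hptdef, Prod.mk_add_mk, hy]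
  exact not_extreme_of_mid (hmem (-ε) le_rfl (by linarith)) (hmem ε (by linarith) le_rfl) hne hmid hq

lemma pin_Y2 (G0 : FinGraph α) (G : σ → FinGraph α) (V1 V2 : Finset α)
    (hdisj : Disjoint V1 V2)
    (y : α → ℝ) (Y : σ → α → ℝ) (D1 D2 : σ → α → ℝ) (g : α → ℝ) (gS : σ → α → ℝ)
    (hq : ((y, Y, D1, D2), (g, gS)) ∈ Set.extremePoints ℝ (regionQemb G0 G V1 V2)) :
    ∀ (s₀ : σ), ∀ v ∈ (G s₀).verts ∩ V2, Y s₀ v = 0 ∨ Y s₀ v = gS s₀ v := by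
  intro s₀ v₀ hv
  by_contra hcon
  push_neg at hcon
  obtain ⟨hy0, hty⟩ := hcon
  have hqm := hq.1
  simp only [regionQemb, regionQ, Set.mem_setOf_eq] at hqm
  obtain ⟨⟨hC1, hC2, hC3, hC4, hC5, hC6, hC7, hC8, hC9, hC10, hC11⟩, hZ1, hZ2, hZ3⟩ := hqm
  rw [Finset.mem_inter] at hv
  obtain ⟨hv0, hv2⟩ := hv
  have hv1 : v₀ ∉ V1 := fun h => (Finset.disjoint_left.mp hdisj h) hv2
  have ypos : 0 < Y s₀ v₀ := lt_of_le_of_ne (hC10 s₀ v₀ hv0) (Ne.symm hy0)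
  have spos : 0 < Y s₀ v₀ - gS s₀ v₀ := by
    have h1 := hC7 s₀ v₀ (Finset.mem_inter.mpr ⟨hv0, hv2⟩)
    rcases lt_or_eq_of_le h1 with h | h
    · linarith
    · exact absurd (by linarith : Y s₀ v₀ = gS s₀ v₀) hty
  set ε : ℝ := min (Y s₀ v₀) (Y s₀ v₀ - gS s₀ v₀) with hεdef
  have hε : 0 < ε := lt_min ypos spos
  have hεy : ε ≤ Y s₀ v₀ := min_le_left _ _
  have hεs : ε ≤ Y s₀ v₀ - gS s₀ v₀ := min_le_right _ _
  set pt : ℝ → (TwoStagePt α σ × ((α → ℝ) × (σ → α → ℝ))) := fun t =>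
    ((y, fun s w => if s = s₀ ∧ w = v₀ then Y s w + t else Y s w, D1, D2), (g, gS)) with hptdef
  have hmem : ∀ t : ℝ, -ε ≤ t → t ≤ ε → pt t ∈ regionQemb G0 G V1 V2 := by
    intro t ht1 ht2
    simp only [regionQemb, regionQ, Set.mem_setOf_eq, hptdef]
    refine ⟨⟨hC1, ?_, hC3, hC4, hC5, hC6, ?_, hC8, hC9, ?_, hC11⟩, hZ1, ?_, hZ3⟩
    · intro s v hvv
      rw [Finset.mem_inter] at hvv
      by_cases h : s = s₀ ∧ v = v₀
      · exact absurd hvv.2 (h.2 ▸ hv1)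
      · rw [if_neg h]; exact hC2 s v (Finset.mem_inter.mpr hvv)
    · intro s v hvv
      by_cases h : s = s₀ ∧ v = v₀
      · obtain ⟨h1, h2⟩ := h; subst h1; subst h2; rw [if_pos ⟨rfl, rfl⟩]; linarith
      · rw [if_neg h]; exact hC7 s v hvv
    · intro s v hvv
      by_cases h : s = s₀ ∧ v = v₀
      · obtain ⟨h1, h2⟩ := h; subst h1; subst h2; rw [if_pos ⟨rfl, rfl⟩]; linarith
      · rw [if_neg h]; exact hC10 s v hvv
    · intro s v hvv
      refine ⟨?_, (hZ2 s v hvv).2⟩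
      by_cases h : s = s₀ ∧ v = v₀
      · exact absurd (h.2 ▸ (h.1 ▸ hvv : v ∉ (G s₀).verts)) (fun hh => hh hv0)
      · rw [if_neg h]; exact (hZ2 s v hvv).1
  have hne : pt (-ε) ≠ ((y, Y, D1, D2), (g, gS)) := by
    intro h
    have h2 := congrFun (congrFun (congrArg (fun p => p.1.2.1) h) s₀) v₀
    simp only [hptdef] at h2
    simp at h2
    linarith
  have hmid : pt (-ε) + pt ε = ((y, Y, D1, D2), (g, gS)) + ((y, Y, D1, D2), (g, gS)) := by
    have hy : (fun s w => if s = s₀ ∧ w = v₀ then Y s w + (-ε) else Y s w) + (fun s w => if s = s₀ ∧ w = v₀ then Y s w + ε else Y s w) = Y + Y := by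
      funext s w
      by_cases h : s = s₀ ∧ w = v₀ <;> simp [h, Pi.add_apply] <;> ring
    simp only [hptdef, Prod.mk_add_mk, hy]
  exact not_extreme_of_mid (hmem (-ε) le_rfl (by linarith)) (hmem ε (by linarith) le_rfl) hne hmid hq
lemma pin_D1V1 (G0 : FinGraph α) (G : σ → FinGraph α) (V1 V2 : Finset α)
    (hdisj : Disjoint V1 V2)
    (y : α → ℝ) (Y : σ → α → ℝ) (D1 D2 : σ → α → ℝ) (g : α → ℝ) (gS : σ → α → ℝ)
    (hq : ((y, Y, D1, D2), (g, gS)) ∈ Set.extremePoints ℝ (regionQemb G0 G V1 V2)) :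
    ∀ (s₀ : σ), ∀ v ∈ (G0.verts ∩ (G s₀).verts) ∩ V1,
      D1 s₀ v = 0 ∨ g v - gS s₀ v + D1 s₀ v = 0 := by
  intro s₀ v₀ hv
  by_contra hcon
  push_neg at hcon
  obtain ⟨hy0, hty⟩ := hcon
  have hqm := hq.1
  simp only [regionQemb, regionQ, Set.mem_setOf_eq] at hqm
  obtain ⟨⟨hC1, hC2, hC3, hC4, hC5, hC6, hC7, hC8, hC9, hC10, hC11⟩, hZ1, hZ2, hZ3⟩ := hqm
  rw [Finset.mem_inter] at hv
  obtain ⟨hv0, hv1⟩ := hv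
  have hv2 : v₀ ∉ V2 := fun h => (Finset.disjoint_left.mp hdisj hv1) h
  have ypos : 0 < D1 s₀ v₀ := lt_of_le_of_ne (hC11 s₀ v₀ hv0).1 (Ne.symm hy0)
  have spos : 0 < g v₀ - gS s₀ v₀ + D1 s₀ v₀ := by
    have h1 := (hC3 s₀ v₀ (Finset.mem_inter.mpr ⟨hv0, hv1⟩)).1
    rcases lt_or_eq_of_le h1 with h | h
    · linarith
    · exact absurd h.symm hty
  set ε : ℝ := min (D1 s₀ v₀) (g v₀ - gS s₀ v₀ + D1 s₀ v₀) with hεdef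
  have hε : 0 < ε := lt_min ypos spos
  have hεy : ε ≤ D1 s₀ v₀ := min_le_left _ _
  have hεs : ε ≤ g v₀ - gS s₀ v₀ + D1 s₀ v₀ := min_le_right _ _
  set pt : ℝ → (TwoStagePt α σ × ((α → ℝ) × (σ → α → ℝ))) := fun t =>
    ((y, Y, fun s w => if s = s₀ ∧ w = v₀ then D1 s w + t else D1 s w, D2), (g, gS)) with hptdef
  have hmem : ∀ t : ℝ, -ε ≤ t → t ≤ ε → pt t ∈ regionQemb G0 G V1 V2 := by
    intro t ht1 ht2
    simp only [regionQemb, regionQ, Set.mem_setOf_eq, hptdef]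
    refine ⟨⟨hC1, hC2, ?_, hC4, hC5, hC6, hC7, ?_, hC9, hC10, ?_⟩, hZ1, hZ2, ?_⟩
    · intro s v hvv
      refine ⟨?_, (hC3 s v hvv).2⟩
      by_cases h : s = s₀ ∧ v = v₀
      · obtain ⟨h1, h2⟩ := h; subst h1; subst h2; rw [if_pos ⟨rfl, rfl⟩]; linarith
      · rw [if_neg h]; exact (hC3 s v hvv).1
    · intro s v hvv
      rw [Finset.mem_inter] at hvv
      refine ⟨?_, (hC8 s v (Finset.mem_inter.mpr hvv)).2⟩
      by_cases h : s = s₀ ∧ v = v₀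
      · exact absurd hvv.2 (h.2 ▸ hv2)
      · rw [if_neg h]; exact (hC8 s v (Finset.mem_inter.mpr hvv)).1
    · intro s v hvv
      refine ⟨?_, (hC11 s v hvv).2⟩
      by_cases h : s = s₀ ∧ v = v₀
      · obtain ⟨h1, h2⟩ := h; subst h1; subst h2; rw [if_pos ⟨rfl, rfl⟩]; linarith
      · rw [if_neg h]; exact (hC11 s v hvv).1
    · intro s v hvv
      refine ⟨?_, (hZ3 s v hvv).2⟩
      by_cases h : s = s₀ ∧ v = v₀
      · exact absurd (h.2 ▸ (h.1 ▸ hvv : v ∉ G0.verts ∩ (G s₀).verts)) (fun hh => hh hv0)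
      · rw [if_neg h]; exact (hZ3 s v hvv).1
  have hne : pt (-ε) ≠ ((y, Y, D1, D2), (g, gS)) := by
    intro h
    have h2 := congrFun (congrFun (congrArg (fun p => p.1.2.2.1) h) s₀) v₀
    simp only [hptdef] at h2
    simp at h2
    linarith
  have hmid : pt (-ε) + pt ε = ((y, Y, D1, D2), (g, gS)) + ((y, Y, D1, D2), (g, gS)) := by
    have hy : (fun s w => if s = s₀ ∧ w = v₀ then D1 s w + (-ε) else D1 s w) + (fun s w => if s = s₀ ∧ w = v₀ then D1 s w + ε else D1 s w) = D1 + D1 := by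
      funext s w
      by_cases h : s = s₀ ∧ w = v₀ <;> simp [h, Pi.add_apply] <;> ring
    simp only [hptdef, Prod.mk_add_mk, hy]
  exact not_extreme_of_mid (hmem (-ε) le_rfl (by linarith)) (hmem ε (by linarith) le_rfl) hne hmid hq

lemma pin_D1V2 (G0 : FinGraph α) (G : σ → FinGraph α) (V1 V2 : Finset α)
    (hdisj : Disjoint V1 V2)
    (y : α → ℝ) (Y : σ → α → ℝ) (D1 D2 : σ → α → ℝ) (g : α → ℝ) (gS : σ → α → ℝ)
    (hq : ((y, Y, D1, D2), (g, gS)) ∈ Set.extremePoints ℝ (regionQemb G0 G V1 V2)) :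
    ∀ (s₀ : σ), ∀ v ∈ (G0.verts ∩ (G s₀).verts) ∩ V2,
      D1 s₀ v = 0 ∨ gS s₀ v - g v + D1 s₀ v = 0 := by
  intro s₀ v₀ hv
  by_contra hcon
  push_neg at hcon
  obtain ⟨hy0, hty⟩ := hcon
  have hqm := hq.1
  simp only [regionQemb, regionQ, Set.mem_setOf_eq] at hqm
  obtain ⟨⟨hC1, hC2, hC3, hC4, hC5, hC6, hC7, hC8, hC9, hC10, hC11⟩, hZ1, hZ2, hZ3⟩ := hqm
  rw [Finset.mem_inter] at hv
  obtain ⟨hv0, hv2⟩ := hv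
  have hv1 : v₀ ∉ V1 := fun h => (Finset.disjoint_left.mp hdisj h) hv2
  have ypos : 0 < D1 s₀ v₀ := lt_of_le_of_ne (hC11 s₀ v₀ hv0).1 (Ne.symm hy0)
  have spos : 0 < gS s₀ v₀ - g v₀ + D1 s₀ v₀ := by
    have h1 := (hC8 s₀ v₀ (Finset.mem_inter.mpr ⟨hv0, hv2⟩)).1
    rcases lt_or_eq_of_le h1 with h | h
    · linarith
    · exact absurd h.symm hty
  set ε : ℝ := min (D1 s₀ v₀) (gS s₀ v₀ - g v₀ + D1 s₀ v₀) with hεdef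
  have hε : 0 < ε := lt_min ypos spos
  have hεy : ε ≤ D1 s₀ v₀ := min_le_left _ _
  have hεs : ε ≤ gS s₀ v₀ - g v₀ + D1 s₀ v₀ := min_le_right _ _
  set pt : ℝ → (TwoStagePt α σ × ((α → ℝ) × (σ → α → ℝ))) := fun t =>
    ((y, Y, fun s w => if s = s₀ ∧ w = v₀ then D1 s w + t else D1 s w, D2), (g, gS)) with hptdef
  have hmem : ∀ t : ℝ, -ε ≤ t → t ≤ ε → pt t ∈ regionQemb G0 G V1 V2 := by
    intro t ht1 ht2
    simp only [regionQemb, regionQ, Set.mem_setOf_eq, hptdef]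
    refine ⟨⟨hC1, hC2, ?_, hC4, hC5, hC6, hC7, ?_, hC9, hC10, ?_⟩, hZ1, hZ2, ?_⟩
    · intro s v hvv
      rw [Finset.mem_inter] at hvv
      refine ⟨?_, (hC3 s v (Finset.mem_inter.mpr hvv)).2⟩
      by_cases h : s = s₀ ∧ v = v₀
      · exact absurd hvv.2 (h.2 ▸ hv1)
      · rw [if_neg h]; exact (hC3 s v (Finset.mem_inter.mpr hvv)).1
    · intro s v hvv
      refine ⟨?_, (hC8 s v hvv).2⟩
      by_cases h : s = s₀ ∧ v = v₀
      · obtain ⟨h1, h2⟩ := h; subst h1; subst h2; rw [if_pos ⟨rfl, rfl⟩]; linarith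
      · rw [if_neg h]; exact (hC8 s v hvv).1
    · intro s v hvv
      refine ⟨?_, (hC11 s v hvv).2⟩
      by_cases h : s = s₀ ∧ v = v₀
      · obtain ⟨h1, h2⟩ := h; subst h1; subst h2; rw [if_pos ⟨rfl, rfl⟩]; linarith
      · rw [if_neg h]; exact (hC11 s v hvv).1
    · intro s v hvv
      refine ⟨?_, (hZ3 s v hvv).2⟩
      by_cases h : s = s₀ ∧ v = v₀
      · exact absurd (h.2 ▸ (h.1 ▸ hvv : v ∉ G0.verts ∩ (G s₀).verts)) (fun hh => hh hv0)
      · rw [if_neg h]; exact (hZ3 s v hvv).1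
  have hne : pt (-ε) ≠ ((y, Y, D1, D2), (g, gS)) := by
    intro h
    have h2 := congrFun (congrFun (congrArg (fun p => p.1.2.2.1) h) s₀) v₀
    simp only [hptdef] at h2
    simp at h2
    linarith
  have hmid : pt (-ε) + pt ε = ((y, Y, D1, D2), (g, gS)) + ((y, Y, D1, D2), (g, gS)) := by
    have hy : (fun s w => if s = s₀ ∧ w = v₀ then D1 s w + (-ε) else D1 s w) + (fun s w => if s = s₀ ∧ w = v₀ then D1 s w + ε else D1 s w) = D1 + D1 := by
      funext s w
      by_cases h : s = s₀ ∧ w = v₀ <;> simp [h, Pi.add_apply] <;> ring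
    simp only [hptdef, Prod.mk_add_mk, hy]
  exact not_extreme_of_mid (hmem (-ε) le_rfl (by linarith)) (hmem ε (by linarith) le_rfl) hne hmid hq

lemma pin_D2V1 (G0 : FinGraph α) (G : σ → FinGraph α) (V1 V2 : Finset α)
    (hdisj : Disjoint V1 V2)
    (y : α → ℝ) (Y : σ → α → ℝ) (D1 D2 : σ → α → ℝ) (g : α → ℝ) (gS : σ → α → ℝ)
    (hq : ((y, Y, D1, D2), (g, gS)) ∈ Set.extremePoints ℝ (regionQemb G0 G V1 V2)) :
    ∀ (s₀ : σ), ∀ v ∈ (G0.verts ∩ (G s₀).verts) ∩ V1,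
      D2 s₀ v = 0 ∨ gS s₀ v - g v + D2 s₀ v = 0 := by
  intro s₀ v₀ hv
  by_contra hcon
  push_neg at hcon
  obtain ⟨hy0, hty⟩ := hcon
  have hqm := hq.1
  simp only [regionQemb, regionQ, Set.mem_setOf_eq] at hqm
  obtain ⟨⟨hC1, hC2, hC3, hC4, hC5, hC6, hC7, hC8, hC9, hC10, hC11⟩, hZ1, hZ2, hZ3⟩ := hqm
  rw [Finset.mem_inter] at hv
  obtain ⟨hv0, hv1⟩ := hv
  have hv2 : v₀ ∉ V2 := fun h => (Finset.disjoint_left.mp hdisj hv1) h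
  have ypos : 0 < D2 s₀ v₀ := lt_of_le_of_ne (hC11 s₀ v₀ hv0).2 (Ne.symm hy0)
  have spos : 0 < gS s₀ v₀ - g v₀ + D2 s₀ v₀ := by
    have h1 := (hC3 s₀ v₀ (Finset.mem_inter.mpr ⟨hv0, hv1⟩)).2
    rcases lt_or_eq_of_le h1 with h | h
    · linarith
    · exact absurd h.symm hty
  set ε : ℝ := min (D2 s₀ v₀) (gS s₀ v₀ - g v₀ + D2 s₀ v₀) with hεdef
  have hε : 0 < ε := lt_min ypos spos
  have hεy : ε ≤ D2 s₀ v₀ := min_le_left _ _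
  have hεs : ε ≤ gS s₀ v₀ - g v₀ + D2 s₀ v₀ := min_le_right _ _
  set pt : ℝ → (TwoStagePt α σ × ((α → ℝ) × (σ → α → ℝ))) := fun t =>
    ((y, Y, D1, fun s w => if s = s₀ ∧ w = v₀ then D2 s w + t else D2 s w), (g, gS)) with hptdef
  have hmem : ∀ t : ℝ, -ε ≤ t → t ≤ ε → pt t ∈ regionQemb G0 G V1 V2 := by
    intro t ht1 ht2
    simp only [regionQemb, regionQ, Set.mem_setOf_eq, hptdef]
    refine ⟨⟨hC1, hC2, ?_, hC4, hC5, hC6, hC7, ?_, hC9, hC10, ?_⟩, hZ1, hZ2, ?_⟩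
    · intro s v hvv
      refine ⟨(hC3 s v hvv).1, ?_⟩
      by_cases h : s = s₀ ∧ v = v₀
      · obtain ⟨h1, h2⟩ := h; subst h1; subst h2; rw [if_pos ⟨rfl, rfl⟩]; linarith
      · rw [if_neg h]; exact (hC3 s v hvv).2
    · intro s v hvv
      rw [Finset.mem_inter] at hvv
      refine ⟨(hC8 s v (Finset.mem_inter.mpr hvv)).1, ?_⟩
      by_cases h : s = s₀ ∧ v = v₀
      · exact absurd hvv.2 (h.2 ▸ hv2)
      · rw [if_neg h]; exact (hC8 s v (Finset.mem_inter.mpr hvv)).2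
    · intro s v hvv
      refine ⟨(hC11 s v hvv).1, ?_⟩
      by_cases h : s = s₀ ∧ v = v₀
      · obtain ⟨h1, h2⟩ := h; subst h1; subst h2; rw [if_pos ⟨rfl, rfl⟩]; linarith
      · rw [if_neg h]; exact (hC11 s v hvv).2
    · intro s v hvv
      refine ⟨(hZ3 s v hvv).1, ?_⟩
      by_cases h : s = s₀ ∧ v = v₀
      · exact absurd (h.2 ▸ (h.1 ▸ hvv : v ∉ G0.verts ∩ (G s₀).verts)) (fun hh => hh hv0)
      · rw [if_neg h]; exact (hZ3 s v hvv).2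
  have hne : pt (-ε) ≠ ((y, Y, D1, D2), (g, gS)) := by
    intro h
    have h2 := congrFun (congrFun (congrArg (fun p => p.1.2.2.2) h) s₀) v₀
    simp only [hptdef] at h2
    simp at h2
    linarith
  have hmid : pt (-ε) + pt ε = ((y, Y, D1, D2), (g, gS)) + ((y, Y, D1, D2), (g, gS)) := by
    have hy : (fun s w => if s = s₀ ∧ w = v₀ then D2 s w + (-ε) else D2 s w) + (fun s w => if s = s₀ ∧ w = v₀ then D2 s w + ε else D2 s w) = D2 + D2 := by
      funext s w
      by_cases h : s = s₀ ∧ w = v₀ <;> simp [h, Pi.add_apply] <;> ring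
    simp only [hptdef, Prod.mk_add_mk, hy]
  exact not_extreme_of_mid (hmem (-ε) le_rfl (by linarith)) (hmem ε (by linarith) le_rfl) hne hmid hq

lemma pin_D2V2 (G0 : FinGraph α) (G : σ → FinGraph α) (V1 V2 : Finset α)
    (hdisj : Disjoint V1 V2)
    (y : α → ℝ) (Y : σ → α → ℝ) (D1 D2 : σ → α → ℝ) (g : α → ℝ) (gS : σ → α → ℝ)
    (hq : ((y, Y, D1, D2), (g, gS)) ∈ Set.extremePoints ℝ (regionQemb G0 G V1 V2)) :
    ∀ (s₀ : σ), ∀ v ∈ (G0.verts ∩ (G s₀).verts) ∩ V2,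
      D2 s₀ v = 0 ∨ g v - gS s₀ v + D2 s₀ v = 0 := by
  intro s₀ v₀ hv
  by_contra hcon
  push_neg at hcon
  obtain ⟨hy0, hty⟩ := hcon
  have hqm := hq.1
  simp only [regionQemb, regionQ, Set.mem_setOf_eq] at hqm
  obtain ⟨⟨hC1, hC2, hC3, hC4, hC5, hC6, hC7, hC8, hC9, hC10, hC11⟩, hZ1, hZ2, hZ3⟩ := hqm
  rw [Finset.mem_inter] at hv
  obtain ⟨hv0, hv2⟩ := hv
  have hv1 : v₀ ∉ V1 := fun h => (Finset.disjoint_left.mp hdisj h) hv2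
  have ypos : 0 < D2 s₀ v₀ := lt_of_le_of_ne (hC11 s₀ v₀ hv0).2 (Ne.symm hy0)
  have spos : 0 < g v₀ - gS s₀ v₀ + D2 s₀ v₀ := by
    have h1 := (hC8 s₀ v₀ (Finset.mem_inter.mpr ⟨hv0, hv2⟩)).2
    rcases lt_or_eq_of_le h1 with h | h
    · linarith
    · exact absurd h.symm hty
  set ε : ℝ := min (D2 s₀ v₀) (g v₀ - gS s₀ v₀ + D2 s₀ v₀) with hεdef
  have hε : 0 < ε := lt_min ypos spos
  have hεy : ε ≤ D2 s₀ v₀ := min_le_left _ _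
  have hεs : ε ≤ g v₀ - gS s₀ v₀ + D2 s₀ v₀ := min_le_right _ _
  set pt : ℝ → (TwoStagePt α σ × ((α → ℝ) × (σ → α → ℝ))) := fun t =>
    ((y, Y, D1, fun s w => if s = s₀ ∧ w = v₀ then D2 s w + t else D2 s w), (g, gS)) with hptdef
  have hmem : ∀ t : ℝ, -ε ≤ t → t ≤ ε → pt t ∈ regionQemb G0 G V1 V2 := by
    intro t ht1 ht2
    simp only [regionQemb, regionQ, Set.mem_setOf_eq, hptdef]
    refine ⟨⟨hC1, hC2, ?_, hC4, hC5, hC6, hC7, ?_, hC9, hC10, ?_⟩, hZ1, hZ2, ?_⟩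
    · intro s v hvv
      rw [Finset.mem_inter] at hvv
      refine ⟨(hC3 s v (Finset.mem_inter.mpr hvv)).1, ?_⟩
      by_cases h : s = s₀ ∧ v = v₀
      · exact absurd hvv.2 (h.2 ▸ hv1)
      · rw [if_neg h]; exact (hC3 s v (Finset.mem_inter.mpr hvv)).2
    · intro s v hvv
      refine ⟨(hC8 s v hvv).1, ?_⟩
      by_cases h : s = s₀ ∧ v = v₀
      · obtain ⟨h1, h2⟩ := h; subst h1; subst h2; rw [if_pos ⟨rfl, rfl⟩]; linarith
      · rw [if_neg h]; exact (hC8 s v hvv).2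
    · intro s v hvv
      refine ⟨(hC11 s v hvv).1, ?_⟩
      by_cases h : s = s₀ ∧ v = v₀
      · obtain ⟨h1, h2⟩ := h; subst h1; subst h2; rw [if_pos ⟨rfl, rfl⟩]; linarith
      · rw [if_neg h]; exact (hC11 s v hvv).2
    · intro s v hvv
      refine ⟨(hZ3 s v hvv).1, ?_⟩
      by_cases h : s = s₀ ∧ v = v₀
      · exact absurd (h.2 ▸ (h.1 ▸ hvv : v ∉ G0.verts ∩ (G s₀).verts)) (fun hh => hh hv0)
      · rw [if_neg h]; exact (hZ3 s v hvv).2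
  have hne : pt (-ε) ≠ ((y, Y, D1, D2), (g, gS)) := by
    intro h
    have h2 := congrFun (congrFun (congrArg (fun p => p.1.2.2.2) h) s₀) v₀
    simp only [hptdef] at h2
    simp at h2
    linarith
  have hmid : pt (-ε) + pt ε = ((y, Y, D1, D2), (g, gS)) + ((y, Y, D1, D2), (g, gS)) := by
    have hy : (fun s w => if s = s₀ ∧ w = v₀ then D2 s w + (-ε) else D2 s w) + (fun s w => if s = s₀ ∧ w = v₀ then D2 s w + ε else D2 s w) = D2 + D2 := by
      funext s w
      by_cases h : s = s₀ ∧ w = v₀ <;> simp [h, Pi.add_apply] <;> ring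
    simp only [hptdef, Prod.mk_add_mk, hy]
  exact not_extreme_of_mid (hmem (-ε) le_rfl (by linarith)) (hmem ε (by linarith) le_rfl) hne hmid hq
lemma dir_lemma (G0 : FinGraph α) (G : σ → FinGraph α) (V1 V2 : Finset α)
    (hdisj : Disjoint V1 V2) (hWF0 : G0.WF) (hWFs : ∀ s : σ, (G s).WF)
    (y : α → ℝ) (Y : σ → α → ℝ) (D1 D2 : σ → α → ℝ) (g : α → ℝ) (gS : σ → α → ℝ)
    (hq : ((y, Y, D1, D2), (g, gS)) ∈ Set.extremePoints ℝ (regionQemb G0 G V1 V2))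
    (c : ℝ) (B : Finset ℝ) (h0B : (0:ℝ) ∈ B) (h1B : (1:ℝ) ∈ B) (hcB : c ∈ B)
    (hc0 : c ≠ 0) (hc1 : c ≠ 1)
    (m1 : Prop) (scope : σ → Prop)
    (hms : m1 → ∀ s, scope s)
    (hnm : ¬ m1 → ∀ v ∈ G0.verts, g v ≠ c)
    (hgB : ∀ v ∈ G0.verts, g v ∈ B)
    (hsB : ∀ s, scope s → ∀ v ∈ (G s).verts, gS s v ∈ B)
    (hwit : (m1 ∧ ∃ v ∈ G0.verts, g v = c) ∨ (∃ s, scope s ∧ ∃ v ∈ (G s).verts, gS s v = c)) :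
    False := by
  classical
  -- pinned facts
  have hpy1 := pin_y1 G0 G V1 V2 hdisj y Y D1 D2 g gS hq
  have hpy2 := pin_y2 G0 G V1 V2 hdisj y Y D1 D2 g gS hq
  have hpY1 := pin_Y1 G0 G V1 V2 hdisj y Y D1 D2 g gS hq
  have hpY2 := pin_Y2 G0 G V1 V2 hdisj y Y D1 D2 g gS hq
  have hpD1a := pin_D1V1 G0 G V1 V2 hdisj y Y D1 D2 g gS hq
  have hpD1b := pin_D1V2 G0 G V1 V2 hdisj y Y D1 D2 g gS hq
  have hpD2a := pin_D2V1 G0 G V1 V2 hdisj y Y D1 D2 g gS hq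
  have hpD2b := pin_D2V2 G0 G V1 V2 hdisj y Y D1 D2 g gS hq
  have hqm := hq.1
  simp only [regionQemb, regionQ, Set.mem_setOf_eq] at hqm
  obtain ⟨⟨hC1, hC2, hC3, hC4, hC5, hC6, hC7, hC8, hC9, hC10, hC11⟩, hZ1, hZ2, hZ3⟩ := hqm
  -- the uniform step size
  set Dset : Finset ℝ := ((B ×ˢ B).image fun p : ℝ × ℝ => p.1 - p.2).filter (fun x => 0 < x)
    with hDdef
  have h1D : (1:ℝ) ∈ Dset := by
    refine Finset.mem_filter.mpr ⟨Finset.mem_image.mpr ⟨(1, 0),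
      Finset.mem_product.mpr ⟨h1B, h0B⟩, by norm_num⟩, one_pos⟩
  have hDne : Dset.Nonempty := ⟨1, h1D⟩
  set ε : ℝ := Dset.min' hDne with hεdef
  have hε : 0 < ε := by
    have hmm := Dset.min'_mem hDne
    exact (Finset.mem_filter.mp hmm).2
  have hεle : ∀ a ∈ B, ∀ b ∈ B, 0 < a - b → ε ≤ a - b := by
    intro a ha b hb hab
    apply Finset.min'_le
    exact Finset.mem_filter.mpr
      ⟨Finset.mem_image.mpr ⟨(a, b), Finset.mem_product.mpr ⟨ha, hb⟩, rfl⟩, hab⟩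
  -- the direction
  set Rg : α → ℝ := fun v => if m1 ∧ v ∈ G0.verts ∧ g v = c then 1 else 0 with hRgdef
  set RgS : σ → α → ℝ :=
    fun s v => if scope s ∧ v ∈ (G s).verts ∧ gS s v = c then 1 else 0 with hRgSdef
  set Ry : α → ℝ := fun v =>
    if v ∈ V1 ∧ m1 ∧ v ∈ G0.verts ∧ g v = c ∧ g v + y v = 1 then -1
    else if v ∈ V2 ∧ m1 ∧ v ∈ G0.verts ∧ g v = c ∧ y v = g v then 1 else 0 with hRydef
  set RY : σ → α → ℝ := fun s v =>
    if v ∈ V1 ∧ scope s ∧ v ∈ (G s).verts ∧ gS s v = c ∧ gS s v + Y s v = 1 then -1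
    else if v ∈ V2 ∧ scope s ∧ v ∈ (G s).verts ∧ gS s v = c ∧ Y s v = gS s v then 1 else 0
    with hRYdef
  set RD1 : σ → α → ℝ := fun s v =>
    if v ∈ V1 ∧ v ∈ G0.verts ∧ v ∈ (G s).verts ∧ g v - gS s v + D1 s v = 0
      then RgS s v - Rg v
    else if v ∈ V2 ∧ v ∈ G0.verts ∧ v ∈ (G s).verts ∧ gS s v - g v + D1 s v = 0
      then Rg v - RgS s v
    else 0 with hRD1def
  set RD2 : σ → α → ℝ := fun s v =>
    if v ∈ V1 ∧ v ∈ G0.verts ∧ v ∈ (G s).verts ∧ gS s v - g v + D2 s v = 0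
      then Rg v - RgS s v
    else if v ∈ V2 ∧ v ∈ G0.verts ∧ v ∈ (G s).verts ∧ g v - gS s v + D2 s v = 0
      then RgS s v - Rg v
    else 0 with hRD2def
  -- value lemmas
  have hRgval : ∀ v, Rg v = 0 ∨ (Rg v = 1 ∧ m1 ∧ v ∈ G0.verts ∧ g v = c) := by
    intro v; simp only [hRgdef]; split_ifs with h
    · exact Or.inr ⟨rfl, h⟩
    · exact Or.inl rfl
  have hRgpos : ∀ v, m1 → v ∈ G0.verts → g v = c → Rg v = 1 := by
    intro v h1 h2 h3; simp only [hRgdef]; rw [if_pos ⟨h1, h2, h3⟩]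
  have hRgne : ∀ v, g v ≠ c → Rg v = 0 := by
    intro v h; simp only [hRgdef]; rw [if_neg (fun hh => h hh.2.2)]
  have hRgnm : ∀ v, v ∉ G0.verts → Rg v = 0 := by
    intro v h; simp only [hRgdef]; rw [if_neg (fun hh => h hh.2.1)]
  have hRgzc : ∀ v, v ∈ G0.verts → Rg v = 0 → g v ≠ c := by
    intro v hv h0 hcc
    by_cases hm : m1
    · rw [hRgpos v hm hv hcc] at h0; norm_num at h0
    · exact hnm hm v hv hcc
  have hRgSval : ∀ s v, RgS s v = 0 ∨ (RgS s v = 1 ∧ scope s ∧ v ∈ (G s).verts ∧ gS s v = c) := by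
    intro s v; simp only [hRgSdef]; split_ifs with h
    · exact Or.inr ⟨rfl, h⟩
    · exact Or.inl rfl
  have hRgSpos : ∀ s v, scope s → v ∈ (G s).verts → gS s v = c → RgS s v = 1 := by
    intro s v h1 h2 h3; simp only [hRgSdef]; rw [if_pos ⟨h1, h2, h3⟩]
  have hRgSne : ∀ s v, gS s v ≠ c → RgS s v = 0 := by
    intro s v h; simp only [hRgSdef]; rw [if_neg (fun hh => h hh.2.2)]
  have hRgSnm : ∀ s v, v ∉ (G s).verts → RgS s v = 0 := by
    intro s v h; simp only [hRgSdef]; rw [if_neg (fun hh => h hh.2.1)]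
  have hRgSzc : ∀ s v, scope s → v ∈ (G s).verts → RgS s v = 0 → gS s v ≠ c := by
    intro s v hs hv h0 hcc
    rw [hRgSpos s v hs hv hcc] at h0; norm_num at h0
  have hRyval : ∀ v, Ry v = 0 ∨
      (Ry v = -1 ∧ v ∈ V1 ∧ m1 ∧ v ∈ G0.verts ∧ g v = c ∧ g v + y v = 1) ∨
      (Ry v = 1 ∧ v ∈ V2 ∧ m1 ∧ v ∈ G0.verts ∧ g v = c ∧ y v = g v) := by
    intro v; simp only [hRydef]; split_ifs with h1 h2
    · exact Or.inr (Or.inl ⟨rfl, h1⟩)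
    · exact Or.inr (Or.inr ⟨rfl, h2⟩)
    · exact Or.inl rfl
  have hRy1 : ∀ v, v ∈ V1 → m1 → v ∈ G0.verts → g v = c → g v + y v = 1 → Ry v = -1 := by
    intro v h1 h2 h3 h4 h5; simp only [hRydef]; rw [if_pos ⟨h1, h2, h3, h4, h5⟩]
  have hRy2 : ∀ v, v ∉ V1 → v ∈ V2 → m1 → v ∈ G0.verts → g v = c → y v = g v → Ry v = 1 := by
    intro v h0 h1 h2 h3 h4 h5; simp only [hRydef]
    rw [if_neg (fun hh => h0 hh.1), if_pos ⟨h1, h2, h3, h4, h5⟩]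
  have hRyzero : ∀ v, ¬(v ∈ V1 ∧ m1 ∧ v ∈ G0.verts ∧ g v = c ∧ g v + y v = 1) →
      ¬(v ∈ V2 ∧ m1 ∧ v ∈ G0.verts ∧ g v = c ∧ y v = g v) → Ry v = 0 := by
    intro v h1 h2; simp only [hRydef]; rw [if_neg h1, if_neg h2]
  have hRYval : ∀ s v, RY s v = 0 ∨
      (RY s v = -1 ∧ v ∈ V1 ∧ scope s ∧ v ∈ (G s).verts ∧ gS s v = c ∧ gS s v + Y s v = 1) ∨
      (RY s v = 1 ∧ v ∈ V2 ∧ scope s ∧ v ∈ (G s).verts ∧ gS s v = c ∧ Y s v = gS s v) := by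
    intro s v; simp only [hRYdef]; split_ifs with h1 h2
    · exact Or.inr (Or.inl ⟨rfl, h1⟩)
    · exact Or.inr (Or.inr ⟨rfl, h2⟩)
    · exact Or.inl rfl
  have hRY1 : ∀ s v, v ∈ V1 → scope s → v ∈ (G s).verts → gS s v = c → gS s v + Y s v = 1 →
      RY s v = -1 := by
    intro s v h1 h2 h3 h4 h5; simp only [hRYdef]; rw [if_pos ⟨h1, h2, h3, h4, h5⟩]
  have hRY2 : ∀ s v, v ∉ V1 → v ∈ V2 → scope s → v ∈ (G s).verts → gS s v = c →
      Y s v = gS s v → RY s v = 1 := by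
    intro s v h0 h1 h2 h3 h4 h5; simp only [hRYdef]
    rw [if_neg (fun hh => h0 hh.1), if_pos ⟨h1, h2, h3, h4, h5⟩]
  have hRYzero : ∀ s v, ¬(v ∈ V1 ∧ scope s ∧ v ∈ (G s).verts ∧ gS s v = c ∧ gS s v + Y s v = 1) →
      ¬(v ∈ V2 ∧ scope s ∧ v ∈ (G s).verts ∧ gS s v = c ∧ Y s v = gS s v) → RY s v = 0 := by
    intro s v h1 h2; simp only [hRYdef]; rw [if_neg h1, if_neg h2]
  have hRD1t1 : ∀ s v, v ∈ V1 → v ∈ G0.verts → v ∈ (G s).verts → g v - gS s v + D1 s v = 0 →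
      RD1 s v = RgS s v - Rg v := by
    intro s v h1 h2 h3 h4; simp only [hRD1def]; rw [if_pos ⟨h1, h2, h3, h4⟩]
  have hRD1t2 : ∀ s v, v ∉ V1 → v ∈ V2 → v ∈ G0.verts → v ∈ (G s).verts →
      gS s v - g v + D1 s v = 0 → RD1 s v = Rg v - RgS s v := by
    intro s v h0 h1 h2 h3 h4; simp only [hRD1def]
    rw [if_neg (fun hh => h0 hh.1), if_pos ⟨h1, h2, h3, h4⟩]
  have hRD1zero : ∀ s v, ¬(v ∈ V1 ∧ v ∈ G0.verts ∧ v ∈ (G s).verts ∧ g v - gS s v + D1 s v = 0) →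
      ¬(v ∈ V2 ∧ v ∈ G0.verts ∧ v ∈ (G s).verts ∧ gS s v - g v + D1 s v = 0) → RD1 s v = 0 := by
    intro s v h1 h2; simp only [hRD1def]; rw [if_neg h1, if_neg h2]
  have hRD1val : ∀ s v, RD1 s v = 0 ∨
      (RD1 s v = RgS s v - Rg v ∧ v ∈ V1 ∧ v ∈ G0.verts ∧ v ∈ (G s).verts ∧
        g v - gS s v + D1 s v = 0) ∨
      (RD1 s v = Rg v - RgS s v ∧ v ∈ V2 ∧ v ∈ G0.verts ∧ v ∈ (G s).verts ∧
        gS s v - g v + D1 s v = 0) := by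
    intro s v; simp only [hRD1def]; split_ifs with h1 h2
    · exact Or.inr (Or.inl ⟨rfl, h1⟩)
    · exact Or.inr (Or.inr ⟨rfl, h2⟩)
    · exact Or.inl rfl
  have hRD2t1 : ∀ s v, v ∈ V1 → v ∈ G0.verts → v ∈ (G s).verts → gS s v - g v + D2 s v = 0 →
      RD2 s v = Rg v - RgS s v := by
    intro s v h1 h2 h3 h4; simp only [hRD2def]; rw [if_pos ⟨h1, h2, h3, h4⟩]
  have hRD2t2 : ∀ s v, v ∉ V1 → v ∈ V2 → v ∈ G0.verts → v ∈ (G s).verts →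
      g v - gS s v + D2 s v = 0 → RD2 s v = RgS s v - Rg v := by
    intro s v h0 h1 h2 h3 h4; simp only [hRD2def]
    rw [if_neg (fun hh => h0 hh.1), if_pos ⟨h1, h2, h3, h4⟩]
  have hRD2zero : ∀ s v, ¬(v ∈ V1 ∧ v ∈ G0.verts ∧ v ∈ (G s).verts ∧ gS s v - g v + D2 s v = 0) →
      ¬(v ∈ V2 ∧ v ∈ G0.verts ∧ v ∈ (G s).verts ∧ g v - gS s v + D2 s v = 0) → RD2 s v = 0 := by
    intro s v h1 h2; simp only [hRD2def]; rw [if_neg h1, if_neg h2]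
  have hRD2val : ∀ s v, RD2 s v = 0 ∨
      (RD2 s v = Rg v - RgS s v ∧ v ∈ V1 ∧ v ∈ G0.verts ∧ v ∈ (G s).verts ∧
        gS s v - g v + D2 s v = 0) ∨
      (RD2 s v = RgS s v - Rg v ∧ v ∈ V2 ∧ v ∈ G0.verts ∧ v ∈ (G s).verts ∧
        g v - gS s v + D2 s v = 0) := by
    intro s v; simp only [hRD2def]; split_ifs with h1 h2
    · exact Or.inr (Or.inl ⟨rfl, h1⟩)
    · exact Or.inr (Or.inr ⟨rfl, h2⟩)
    · exact Or.inl rfl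
  clear_value Rg RgS Ry RY RD1 RD2
  -- the perturbed points
  set pt : ℝ → (TwoStagePt α σ × ((α → ℝ) × (σ → α → ℝ))) := fun t =>
    ((fun v => y v + t * Ry v, fun s v => Y s v + t * RY s v,
      fun s v => D1 s v + t * RD1 s v, fun s v => D2 s v + t * RD2 s v),
     (fun v => g v + t * Rg v, fun s v => gS s v + t * RgS s v)) with hptdef
  have hmem : ∀ t : ℝ, -ε ≤ t → t ≤ ε → pt t ∈ regionQemb G0 G V1 V2 := by
    intro t ht1 ht2
    simp only [regionQemb, regionQ, Set.mem_setOf_eq, hptdef]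
    refine ⟨⟨?_, ?_, ?_, ?_, ?_, ?_, ?_, ?_, ?_, ?_, ?_⟩, ?_, ?_, ?_⟩
    · -- C1 : 1 ≤ g + y on V0 ∩ V1
      intro v hvv
      rw [Finset.mem_inter] at hvv
      obtain ⟨hv0, hv1⟩ := hvv
      have hv2 : v ∉ V2 := fun h => (Finset.disjoint_left.mp hdisj hv1) h
      have hle := hC1 v (Finset.mem_inter.mpr ⟨hv0, hv1⟩)
      by_cases hm : m1 ∧ g v = c
      · have hRg1 : Rg v = 1 := hRgpos v hm.1 hv0 hm.2
        by_cases htight : g v + y v = 1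
        · have hRy1' : Ry v = -1 := hRy1 v hv1 hm.1 hv0 hm.2 htight
          rw [hRg1, hRy1']; linarith
        · have hRy0 : Ry v = 0 :=
            hRyzero v (fun hh => htight hh.2.2.2.2) (fun hh => hv2 hh.1)
          have hy0 : y v = 0 :=
            (hpy1 v (Finset.mem_inter.mpr ⟨hv0, hv1⟩)).resolve_right
              (fun hh => htight hh)
          have hcge : 0 < c - 1 := by
            rcases lt_or_eq_of_le hle with h | h
            · rw [hm.2] at *; linarith [hy0]
            · exact absurd (hm.2 ▸ (hy0 ▸ h.symm : g v + 0 = 1)) (by rw [hm.2] at *; intro hh; exact hc1 (by linarith))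
          have hεc : ε ≤ c - 1 := hεle c hcB 1 h1B hcge
          rw [hRg1, hRy0, hm.2, hy0]; linarith
      · have hRg0 : Rg v = 0 := by
          rcases hRgval v with h | h
          · exact h
          · exact absurd ⟨h.2.1, h.2.2.2⟩ hm
        have hRy0 : Ry v = 0 :=
          hRyzero v (fun hh => hm ⟨hh.2.1, hh.2.2.2.1⟩) (fun hh => hv2 hh.1)
        rw [hRg0, hRy0]; linarith
    · -- C2 : 1 ≤ gS + Y on Vs ∩ V1
      intro s v hvv
      rw [Finset.mem_inter] at hvv
      obtain ⟨hv0, hv1⟩ := hvv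
      have hv2 : v ∉ V2 := fun h => (Finset.disjoint_left.mp hdisj hv1) h
      have hle := hC2 s v (Finset.mem_inter.mpr ⟨hv0, hv1⟩)
      by_cases hm : scope s ∧ gS s v = c
      · have hRg1 : RgS s v = 1 := hRgSpos s v hm.1 hv0 hm.2
        by_cases htight : gS s v + Y s v = 1
        · have hRy1' : RY s v = -1 := hRY1 s v hv1 hm.1 hv0 hm.2 htight
          rw [hRg1, hRy1']; linarith
        · have hRy0 : RY s v = 0 :=
            hRYzero s v (fun hh => htight hh.2.2.2.2) (fun hh => hv2 hh.1)
          have hy0 : Y s v = 0 :=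
            (hpY1 s v (Finset.mem_inter.mpr ⟨hv0, hv1⟩)).resolve_right
              (fun hh => htight hh)
          have hcge : 0 < c - 1 := by
            rw [hm.2, hy0] at hle
            rcases lt_or_eq_of_le hle with h | h
            · linarith
            · exact absurd (by linarith : c = 1) hc1
          have hεc : ε ≤ c - 1 := hεle c hcB 1 h1B hcge
          rw [hRg1, hRy0, hm.2, hy0]; linarith
      · have hRg0 : RgS s v = 0 := by
          rcases hRgSval s v with h | h
          · exact h
          · exact absurd ⟨h.2.1, h.2.2.2⟩ hm
        have hRy0 : RY s v = 0 :=
          hRYzero s v (fun hh => hm ⟨hh.2.1, hh.2.2.2.1⟩) (fun hh => hv2 hh.1)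
        rw [hRg0, hRy0]; linarith
    · -- C3 : rows (2),(2') on (V0 ∩ Vs) ∩ V1
      intro s v hvv
      rw [Finset.mem_inter] at hvv
      obtain ⟨hv0s, hv1⟩ := hvv
      rw [Finset.mem_inter] at hv0s
      obtain ⟨hv0, hvs⟩ := hv0s
      have hv2 : v ∉ V2 := fun h => (Finset.disjoint_left.mp hdisj hv1) h
      have hmemv : v ∈ (G0.verts ∩ (G s).verts) ∩ V1 :=
        Finset.mem_inter.mpr ⟨Finset.mem_inter.mpr ⟨hv0, hvs⟩, hv1⟩
      have hC3' := hC3 s v hmemv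
      constructor
      · by_cases htight : g v - gS s v + D1 s v = 0
        · rw [hRD1t1 s v hv1 hv0 hvs htight]; linarith
        · have hRD10 : RD1 s v = 0 :=
            hRD1zero s v (fun hh => htight hh.2.2.2) (fun hh => hv2 hh.1)
          have hD10 : D1 s v = 0 := (hpD1a s v hmemv).resolve_right htight
          rw [hRD10]
          rcases hRgval v with h1 | h1 <;> rcases hRgSval s v with h2 | h2
          · rw [h1, h2]; linarith
          · -- Rg = 0, RgS = 1 : gS = c, g ≠ c
            have hgne : g v ≠ c := hRgzc v hv0 h1
            have hslack : 0 < g v - c := by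
              have := hC3'.1
              rw [hD10, h2.2.2.2] at this
              rcases lt_or_eq_of_le this with h | h
              · linarith
              · exact absurd (by linarith : g v = c) hgne
            have hεc : ε ≤ g v - c := hεle (g v) (hgB v hv0) c hcB hslack
            rw [h1, h2.1, h2.2.2.2, hD10]; linarith
          · -- Rg = 1, RgS = 0 : g = c, gS ≠ c
            have hsc : scope s := hms h1.2.1 s
            have hgne : gS s v ≠ c := hRgSzc s v hsc hvs h2
            have hslack : 0 < c - gS s v := by
              have := hC3'.1
              rw [hD10, h1.2.2.2] at this
              rcases lt_or_eq_of_le this with h | h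
              · linarith
              · exact absurd (by linarith : gS s v = c) hgne
            have hεc : ε ≤ c - gS s v := hεle c hcB (gS s v) (hsB s hsc v hvs) hslack
            rw [h1.1, h2, h1.2.2.2, hD10]; linarith
          · rw [h1.1, h2.1]; linarith
      · by_cases htight : gS s v - g v + D2 s v = 0
        · rw [hRD2t1 s v hv1 hv0 hvs htight]; linarith
        · have hRD20 : RD2 s v = 0 :=
            hRD2zero s v (fun hh => htight hh.2.2.2) (fun hh => hv2 hh.1)
          have hD20 : D2 s v = 0 := (hpD2a s v hmemv).resolve_right htight
          rw [hRD20]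
          rcases hRgval v with h1 | h1 <;> rcases hRgSval s v with h2 | h2
          · rw [h1, h2]; linarith
          · -- Rg = 0, RgS = 1 : gS = c, g ≠ c ; slack = c - g
            have hgne : g v ≠ c := hRgzc v hv0 h1
            have hslack : 0 < c - g v := by
              have := hC3'.2
              rw [hD20, h2.2.2.2] at this
              rcases lt_or_eq_of_le this with h | h
              · linarith
              · exact absurd (by linarith : g v = c) hgne
            have hεc : ε ≤ c - g v := hεle c hcB (g v) (hgB v hv0) hslack
            rw [h1, h2.1, h2.2.2.2, hD20]; linarith
          · -- Rg = 1, RgS = 0 : slack = gS - c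
            have hsc : scope s := hms h1.2.1 s
            have hgne : gS s v ≠ c := hRgSzc s v hsc hvs h2
            have hslack : 0 < gS s v - c := by
              have := hC3'.2
              rw [hD20, h1.2.2.2] at this
              rcases lt_or_eq_of_le this with h | h
              · linarith
              · exact absurd (by linarith : gS s v = c) hgne
            have hεc : ε ≤ gS s v - c := hεle (gS s v) (hsB s hsc v hvs) c hcB hslack
            rw [h1.1, h2, h1.2.2.2, hD20]; linarith
          · rw [h1.1, h2.1]; linarith
    · -- C4 : edges of G0
      intro e he h1 h2
      have he1 : e.1 ∈ G0.verts := (hWF0 e he).1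
      have he2 : e.2 ∈ G0.verts := (hWF0 e he).2.1
      have hle := hC4 e he h1 h2
      rcases hRgval e.1 with ha | ha <;> rcases hRgval e.2 with hb | hb
      · rw [ha, hb]; linarith
      · -- Rg e.1 = 0, Rg e.2 = 1 : g e.2 = c, g e.1 ≠ c ; slack = c - g e.1
        have hgne : g e.1 ≠ c := hRgzc e.1 he1 ha
        have hslack : 0 < c - g e.1 := by
          rw [hb.2.2.2] at hle
          rcases lt_or_eq_of_le hle with h | h
          · linarith
          · exact absurd (by linarith : g e.1 = c) hgne
        have hεc : ε ≤ c - g e.1 := hεle c hcB (g e.1) (hgB e.1 he1) hslack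
        rw [ha, hb.1, hb.2.2.2]; linarith
      · have hgne : g e.2 ≠ c := hRgzc e.2 he2 hb
        have hslack : 0 < g e.2 - c := by
          rw [ha.2.2.2] at hle
          rcases lt_or_eq_of_le hle with h | h
          · linarith
          · exact absurd (by linarith : g e.2 = c) hgne
        have hεc : ε ≤ g e.2 - c := hεle (g e.2) (hgB e.2 he2) c hcB hslack
        rw [ha.1, hb, ha.2.2.2]; linarith
      · rw [ha.1, hb.1]; linarith
    · -- C5 : edges of G s
      intro s e he h1 h2
      have he1 : e.1 ∈ (G s).verts := (hWFs s e he).1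
      have he2 : e.2 ∈ (G s).verts := (hWFs s e he).2.1
      have hle := hC5 s e he h1 h2
      rcases hRgSval s e.1 with ha | ha <;> rcases hRgSval s e.2 with hb | hb
      · rw [ha, hb]; linarith
      · have hgne : gS s e.1 ≠ c := hRgSzc s e.1 hb.2.1 he1 ha
        have hslack : 0 < c - gS s e.1 := by
          rw [hb.2.2.2] at hle
          rcases lt_or_eq_of_le hle with h | h
          · linarith
          · exact absurd (by linarith : gS s e.1 = c) hgne
        have hεc : ε ≤ c - gS s e.1 := hεle c hcB (gS s e.1) (hsB s hb.2.1 e.1 he1) hslack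
        rw [ha, hb.1, hb.2.2.2]; linarith
      · have hgne : gS s e.2 ≠ c := hRgSzc s e.2 ha.2.1 he2 hb
        have hslack : 0 < gS s e.2 - c := by
          rw [ha.2.2.2] at hle
          rcases lt_or_eq_of_le hle with h | h
          · linarith
          · exact absurd (by linarith : gS s e.2 = c) hgne
        have hεc : ε ≤ gS s e.2 - c := hεle (gS s e.2) (hsB s ha.2.1 e.2 he2) c hcB hslack
        rw [ha.1, hb, ha.2.2.2]; linarith
      · rw [ha.1, hb.1]; linarith
    · -- C6 : 0 ≤ y - g on V0 ∩ V2
      intro v hvv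
      rw [Finset.mem_inter] at hvv
      obtain ⟨hv0, hv2⟩ := hvv
      have hv1 : v ∉ V1 := fun h => (Finset.disjoint_left.mp hdisj h) hv2
      have hle := hC6 v (Finset.mem_inter.mpr ⟨hv0, hv2⟩)
      by_cases hm : m1 ∧ g v = c
      · have hRg1 : Rg v = 1 := hRgpos v hm.1 hv0 hm.2
        by_cases htight : y v = g v
        · have hRy1' : Ry v = 1 := hRy2 v hv1 hv2 hm.1 hv0 hm.2 htight
          rw [hRg1, hRy1']; linarith
        · have hRy0 : Ry v = 0 :=
            hRyzero v (fun hh => hv1 hh.1) (fun hh => htight hh.2.2.2.2)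
          have hy0 : y v = 0 :=
            (hpy2 v (Finset.mem_inter.mpr ⟨hv0, hv2⟩)).resolve_right htight
          have hcge : 0 < 0 - c := by
            rw [hm.2, hy0] at hle
            rcases lt_or_eq_of_le hle with h | h
            · linarith
            · exact absurd (by linarith : c = 0) hc0
          have hεc : ε ≤ 0 - c := hεle 0 h0B c hcB hcge
          rw [hRg1, hRy0, hm.2, hy0]; linarith
      · have hRg0 : Rg v = 0 := by
          rcases hRgval v with h | h
          · exact h
          · exact absurd ⟨h.2.1, h.2.2.2⟩ hm
        have hRy0 : Ry v = 0 :=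
          hRyzero v (fun hh => hv1 hh.1) (fun hh => hm ⟨hh.2.1, hh.2.2.2.1⟩)
        rw [hRg0, hRy0]; linarith
    · -- C7 : 0 ≤ Y - gS on Vs ∩ V2
      intro s v hvv
      rw [Finset.mem_inter] at hvv
      obtain ⟨hv0, hv2⟩ := hvv
      have hv1 : v ∉ V1 := fun h => (Finset.disjoint_left.mp hdisj h) hv2
      have hle := hC7 s v (Finset.mem_inter.mpr ⟨hv0, hv2⟩)
      by_cases hm : scope s ∧ gS s v = c
      · have hRg1 : RgS s v = 1 := hRgSpos s v hm.1 hv0 hm.2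
        by_cases htight : Y s v = gS s v
        · have hRy1' : RY s v = 1 := hRY2 s v hv1 hv2 hm.1 hv0 hm.2 htight
          rw [hRg1, hRy1']; linarith
        · have hRy0 : RY s v = 0 :=
            hRYzero s v (fun hh => hv1 hh.1) (fun hh => htight hh.2.2.2.2)
          have hy0 : Y s v = 0 :=
            (hpY2 s v (Finset.mem_inter.mpr ⟨hv0, hv2⟩)).resolve_right htight
          have hcge : 0 < 0 - c := by
            rw [hm.2, hy0] at hle
            rcases lt_or_eq_of_le hle with h | h
            · linarith
            · exact absurd (by linarith : c = 0) hc0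
          have hεc : ε ≤ 0 - c := hεle 0 h0B c hcB hcge
          rw [hRg1, hRy0, hm.2, hy0]; linarith
      · have hRg0 : RgS s v = 0 := by
          rcases hRgSval s v with h | h
          · exact h
          · exact absurd ⟨h.2.1, h.2.2.2⟩ hm
        have hRy0 : RY s v = 0 :=
          hRYzero s v (fun hh => hv1 hh.1) (fun hh => hm ⟨hh.2.1, hh.2.2.2.1⟩)
        rw [hRg0, hRy0]; linarith
    · -- C8 : rows (5),(5') on (V0 ∩ Vs) ∩ V2
      intro s v hvv
      rw [Finset.mem_inter] at hvv
      obtain ⟨hv0s, hv2⟩ := hvv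
      rw [Finset.mem_inter] at hv0s
      obtain ⟨hv0, hvs⟩ := hv0s
      have hv1 : v ∉ V1 := fun h => (Finset.disjoint_left.mp hdisj h) hv2
      have hmemv : v ∈ (G0.verts ∩ (G s).verts) ∩ V2 :=
        Finset.mem_inter.mpr ⟨Finset.mem_inter.mpr ⟨hv0, hvs⟩, hv2⟩
      have hC8' := hC8 s v hmemv
      constructor
      · by_cases htight : gS s v - g v + D1 s v = 0
        · rw [hRD1t2 s v hv1 hv2 hv0 hvs htight]; linarith
        · have hRD10 : RD1 s v = 0 :=
            hRD1zero s v (fun hh => hv1 hh.1) (fun hh => htight hh.2.2.2)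
          have hD10 : D1 s v = 0 := (hpD1b s v hmemv).resolve_right htight
          rw [hRD10]
          rcases hRgval v with h1 | h1 <;> rcases hRgSval s v with h2 | h2
          · rw [h1, h2]; linarith
          · -- Rg = 0, RgS = 1 : slack = c - g ... here slack = gS - g = c - g
            have hgne : g v ≠ c := hRgzc v hv0 h1
            have hslack : 0 < c - g v := by
              have := hC8'.1
              rw [hD10, h2.2.2.2] at this
              rcases lt_or_eq_of_le this with h | h
              · linarith
              · exact absurd (by linarith : g v = c) hgne
            have hεc : ε ≤ c - g v := hεle c hcB (g v) (hgB v hv0) hslack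
            rw [h1, h2.1, h2.2.2.2, hD10]; linarith
          · have hsc : scope s := hms h1.2.1 s
            have hgne : gS s v ≠ c := hRgSzc s v hsc hvs h2
            have hslack : 0 < gS s v - c := by
              have := hC8'.1
              rw [hD10, h1.2.2.2] at this
              rcases lt_or_eq_of_le this with h | h
              · linarith
              · exact absurd (by linarith : gS s v = c) hgne
            have hεc : ε ≤ gS s v - c := hεle (gS s v) (hsB s hsc v hvs) c hcB hslack
            rw [h1.1, h2, h1.2.2.2, hD10]; linarith
          · rw [h1.1, h2.1]; linarith
      · by_cases htight : g v - gS s v + D2 s v = 0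
        · rw [hRD2t2 s v hv1 hv2 hv0 hvs htight]; linarith
        · have hRD20 : RD2 s v = 0 :=
            hRD2zero s v (fun hh => hv1 hh.1) (fun hh => htight hh.2.2.2)
          have hD20 : D2 s v = 0 := (hpD2b s v hmemv).resolve_right htight
          rw [hRD20]
          rcases hRgval v with h1 | h1 <;> rcases hRgSval s v with h2 | h2
          · rw [h1, h2]; linarith
          · have hgne : g v ≠ c := hRgzc v hv0 h1
            have hslack : 0 < g v - c := by
              have := hC8'.2
              rw [hD20, h2.2.2.2] at this
              rcases lt_or_eq_of_le this with h | h
              · linarith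
              · exact absurd (by linarith : g v = c) hgne
            have hεc : ε ≤ g v - c := hεle (g v) (hgB v hv0) c hcB hslack
            rw [h1, h2.1, h2.2.2.2, hD20]; linarith
          · have hsc : scope s := hms h1.2.1 s
            have hgne : gS s v ≠ c := hRgSzc s v hsc hvs h2
            have hslack : 0 < c - gS s v := by
              have := hC8'.2
              rw [hD20, h1.2.2.2] at this
              rcases lt_or_eq_of_le this with h | h
              · linarith
              · exact absurd (by linarith : gS s v = c) hgne
            have hεc : ε ≤ c - gS s v := hεle c hcB (gS s v) (hsB s hsc v hvs) hslack
            rw [h1.1, h2, h1.2.2.2, hD20]; linarith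
          · rw [h1.1, h2.1]; linarith
    · -- C9 : 0 ≤ y on V0
      intro v hv0
      have hle := hC9 v hv0
      rcases hRyval v with h | h | h
      · rw [h]; linarith
      · -- Ry = -1, tight on V1 : y v = 1 - c and c < 1
        have hyval : y v = 1 - c := by rw [h.2.2.2.2.1] at h; linarith [h.2.2.2.2.2]
        have hclt : 0 < 1 - c := by
          rcases lt_or_eq_of_le (hle.trans_eq hyval) with hh | hh
          · linarith
          · exact absurd (by linarith : c = 1) hc1
        have hεc : ε ≤ 1 - c := hεle 1 h1B c hcB hclt
        rw [h.1, hyval]; linarith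
      · -- Ry = 1, tight on V2 : y v = c and c > 0
        have hyval : y v = c := h.2.2.2.2.1 ▸ h.2.2.2.2.2
        have hclt : 0 < c - 0 := by
          rcases lt_or_eq_of_le (hle.trans_eq hyval) with hh | hh
          · linarith
          · exact absurd hh (fun hhh => hc0 hhh.symm)
        have hεc : ε ≤ c - 0 := hεle c hcB 0 h0B hclt
        rw [h.1, hyval]; linarith
    · -- C10 : 0 ≤ Y on Vs
      intro s v hv0
      have hle := hC10 s v hv0
      rcases hRYval s v with h | h | h
      · rw [h]; linarith
      · have hyval : Y s v = 1 - c := by rw [h.2.2.2.2.1] at h; linarith [h.2.2.2.2.2]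
        have hclt : 0 < 1 - c := by
          rcases lt_or_eq_of_le (hle.trans_eq hyval) with hh | hh
          · linarith
          · exact absurd (by linarith : c = 1) hc1
        have hεc : ε ≤ 1 - c := hεle 1 h1B c hcB hclt
        rw [h.1, hyval]; linarith
      · have hyval : Y s v = c := h.2.2.2.2.1 ▸ h.2.2.2.2.2
        have hclt : 0 < c - 0 := by
          rcases lt_or_eq_of_le (hle.trans_eq hyval) with hh | hh
          · linarith
          · exact absurd hh (fun hhh => hc0 hhh.symm)
        have hεc : ε ≤ c - 0 := hεle c hcB 0 h0B hclt
        rw [h.1, hyval]; linarith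
    · -- C11 : 0 ≤ D1, 0 ≤ D2 on V0 ∩ Vs
      intro s v hvv
      have hvv' := hvv
      rw [Finset.mem_inter] at hvv'
      obtain ⟨hv0, hvs⟩ := hvv'
      obtain ⟨hD1le, hD2le⟩ := hC11 s v hvv
      constructor
      · rcases hRD1val s v with h | h | h
        · rw [h]; linarith
        · -- tight on V1 : D1 = gS - g
          obtain ⟨heq, _, _, _, ht⟩ := h
          rcases hRgval v with h1 | h1 <;> rcases hRgSval s v with h2 | h2
          · rw [heq, h1, h2]; linarith
          · -- Rg=0, RgS=1 : D1 = c - g > 0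
            have hgne : g v ≠ c := hRgzc v hv0 h1
            have hD1val : D1 s v = c - g v := by rw [h2.2.2.2] at ht; linarith
            have hpos : 0 < c - g v := by
              rcases lt_or_eq_of_le (hD1le.trans_eq hD1val) with hh | hh
              · linarith
              · exact absurd (by linarith : g v = c) hgne
            have hεc : ε ≤ c - g v := hεle c hcB (g v) (hgB v hv0) hpos
            rw [heq, h1, h2.1, hD1val]; linarith
          · -- Rg=1, RgS=0 : D1 = gS - c > 0
            have hsc : scope s := hms h1.2.1 s
            have hgne : gS s v ≠ c := hRgSzc s v hsc hvs h2
            have hD1val : D1 s v = gS s v - c := by rw [h1.2.2.2] at ht; linarith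
            have hpos : 0 < gS s v - c := by
              rcases lt_or_eq_of_le (hD1le.trans_eq hD1val) with hh | hh
              · linarith
              · exact absurd (by linarith : gS s v = c) hgne
            have hεc : ε ≤ gS s v - c := hεle (gS s v) (hsB s hsc v hvs) c hcB hpos
            rw [heq, h1.1, h2, hD1val]; linarith
          · rw [heq, h1.1, h2.1]; linarith
        · -- tight on V2 : D1 = g - gS
          obtain ⟨heq, _, _, _, ht⟩ := h
          rcases hRgval v with h1 | h1 <;> rcases hRgSval s v with h2 | h2
          · rw [heq, h1, h2]; linarith
          · -- Rg=0, RgS=1 : D1 = g - c > 0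
            have hgne : g v ≠ c := hRgzc v hv0 h1
            have hD1val : D1 s v = g v - c := by rw [h2.2.2.2] at ht; linarith
            have hpos : 0 < g v - c := by
              rcases lt_or_eq_of_le (hD1le.trans_eq hD1val) with hh | hh
              · linarith
              · exact absurd (by linarith : g v = c) hgne
            have hεc : ε ≤ g v - c := hεle (g v) (hgB v hv0) c hcB hpos
            rw [heq, h1, h2.1, hD1val]; linarith
          · -- Rg=1, RgS=0 : D1 = c - gS > 0
            have hsc : scope s := hms h1.2.1 s
            have hgne : gS s v ≠ c := hRgSzc s v hsc hvs h2
            have hD1val : D1 s v = c - gS s v := by rw [h1.2.2.2] at ht; linarith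
            have hpos : 0 < c - gS s v := by
              rcases lt_or_eq_of_le (hD1le.trans_eq hD1val) with hh | hh
              · linarith
              · exact absurd (by linarith : gS s v = c) hgne
            have hεc : ε ≤ c - gS s v := hεle c hcB (gS s v) (hsB s hsc v hvs) hpos
            rw [heq, h1.1, h2, hD1val]; linarith
          · rw [heq, h1.1, h2.1]; linarith
      · rcases hRD2val s v with h | h | h
        · rw [h]; linarith
        · -- tight on V1 : D2 = g - gS ; RD2 = Rg - RgS
          obtain ⟨heq, _, _, _, ht⟩ := h
          rcases hRgval v with h1 | h1 <;> rcases hRgSval s v with h2 | h2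
          · rw [heq, h1, h2]; linarith
          · -- Rg=0, RgS=1 : RD2 = -1 ; D2 = g - c > 0
            have hgne : g v ≠ c := hRgzc v hv0 h1
            have hD2val : D2 s v = g v - c := by rw [h2.2.2.2] at ht; linarith
            have hpos : 0 < g v - c := by
              rcases lt_or_eq_of_le (hD2le.trans_eq hD2val) with hh | hh
              · linarith
              · exact absurd (by linarith : g v = c) hgne
            have hεc : ε ≤ g v - c := hεle (g v) (hgB v hv0) c hcB hpos
            rw [heq, h1, h2.1, hD2val]; linarith
          · -- Rg=1, RgS=0 : RD2 = 1 ; D2 = c - gS > 0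
            have hsc : scope s := hms h1.2.1 s
            have hgne : gS s v ≠ c := hRgSzc s v hsc hvs h2
            have hD2val : D2 s v = c - gS s v := by rw [h1.2.2.2] at ht; linarith
            have hpos : 0 < c - gS s v := by
              rcases lt_or_eq_of_le (hD2le.trans_eq hD2val) with hh | hh
              · linarith
              · exact absurd (by linarith : gS s v = c) hgne
            have hεc : ε ≤ c - gS s v := hεle c hcB (gS s v) (hsB s hsc v hvs) hpos
            rw [heq, h1.1, h2, hD2val]; linarith
          · rw [heq, h1.1, h2.1]; linarith
        · -- tight on V2 : D2 = gS - g ; RD2 = RgS - Rg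
          obtain ⟨heq, _, _, _, ht⟩ := h
          rcases hRgval v with h1 | h1 <;> rcases hRgSval s v with h2 | h2
          · rw [heq, h1, h2]; linarith
          · -- Rg=0, RgS=1 : RD2 = 1 ; D2 = c - g > 0
            have hgne : g v ≠ c := hRgzc v hv0 h1
            have hD2val : D2 s v = c - g v := by rw [h2.2.2.2] at ht; linarith
            have hpos : 0 < c - g v := by
              rcases lt_or_eq_of_le (hD2le.trans_eq hD2val) with hh | hh
              · linarith
              · exact absurd (by linarith : g v = c) hgne
            have hεc : ε ≤ c - g v := hεle c hcB (g v) (hgB v hv0) hpos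
            rw [heq, h1, h2.1, hD2val]; linarith
          · -- Rg=1, RgS=0 : RD2 = -1 ; D2 = gS - c > 0
            have hsc : scope s := hms h1.2.1 s
            have hgne : gS s v ≠ c := hRgSzc s v hsc hvs h2
            have hD2val : D2 s v = gS s v - c := by rw [h1.2.2.2] at ht; linarith
            have hpos : 0 < gS s v - c := by
              rcases lt_or_eq_of_le (hD2le.trans_eq hD2val) with hh | hh
              · linarith
              · exact absurd (by linarith : gS s v = c) hgne
            have hεc : ε ≤ gS s v - c := hεle (gS s v) (hsB s hsc v hvs) c hcB hpos
            rw [heq, h1.1, h2, hD2val]; linarith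
          · rw [heq, h1.1, h2.1]; linarith
    · -- Z1
      intro v hv
      obtain ⟨hy0, hg0⟩ := hZ1 v hv
      have hRg0 : Rg v = 0 := hRgnm v hv
      have hRy0 : Ry v = 0 := hRyzero v (fun hh => hv hh.2.2.1) (fun hh => hv hh.2.2.1)
      rw [hRg0, hRy0, hy0, hg0]; constructor <;> ring
    · -- Z2
      intro s v hv
      obtain ⟨hy0, hg0⟩ := hZ2 s v hv
      have hRg0 : RgS s v = 0 := hRgSnm s v hv
      have hRy0 : RY s v = 0 := hRYzero s v (fun hh => hv hh.2.2.1) (fun hh => hv hh.2.2.1)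
      rw [hRg0, hRy0, hy0, hg0]; constructor <;> ring
    · -- Z3
      intro s v hv
      obtain ⟨hd10, hd20⟩ := hZ3 s v hv
      have hni : ¬(v ∈ G0.verts ∧ v ∈ (G s).verts) := by
        intro hh; exact hv (Finset.mem_inter.mpr hh)
      have hRD10 : RD1 s v = 0 :=
        hRD1zero s v (fun hh => hni ⟨hh.2.1, hh.2.2.1⟩) (fun hh => hni ⟨hh.2.1, hh.2.2.1⟩)
      have hRD20 : RD2 s v = 0 :=
        hRD2zero s v (fun hh => hni ⟨hh.2.1, hh.2.2.1⟩) (fun hh => hni ⟨hh.2.1, hh.2.2.1⟩)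
      rw [hRD10, hRD20, hd10, hd20]; constructor <;> ring
  -- nonzero witness
  have hne : pt (-ε) ≠ ((y, Y, D1, D2), (g, gS)) := by
    rcases hwit with ⟨hm1, v, hv, hgc⟩ | ⟨s, hsc, v, hv, hgc⟩
    · intro h
      have h2 := congrFun (congrArg (fun p => p.2.1) h) v
      simp only [hptdef] at h2
      rw [hRgpos v hm1 hv hgc] at h2
      have : (-ε) * 1 = 0 := by linarith
      rw [mul_one] at this
      linarith
    · intro h
      have h2 := congrFun (congrFun (congrArg (fun p => p.2.2) h) s) v
      simp only [hptdef] at h2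
      rw [hRgSpos s v hsc hv hgc] at h2
      have : (-ε) * 1 = 0 := by linarith
      rw [mul_one] at this
      linarith
  have hmid : pt (-ε) + pt ε = ((y, Y, D1, D2), (g, gS)) + ((y, Y, D1, D2), (g, gS)) := by
    have e1 : (fun v => y v + (-ε) * Ry v) + (fun v => y v + ε * Ry v) = y + y := by
      funext v; simp [Pi.add_apply]; ring
    have e2 : (fun s v => Y s v + (-ε) * RY s v) + (fun s v => Y s v + ε * RY s v) = Y + Y := by
      funext s v; simp [Pi.add_apply]; ring
    have e3 : (fun s v => D1 s v + (-ε) * RD1 s v) + (fun s v => D1 s v + ε * RD1 s v)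
        = D1 + D1 := by
      funext s v; simp [Pi.add_apply]; ring
    have e4 : (fun s v => D2 s v + (-ε) * RD2 s v) + (fun s v => D2 s v + ε * RD2 s v)
        = D2 + D2 := by
      funext s v; simp [Pi.add_apply]; ring
    have e5 : (fun v => g v + (-ε) * Rg v) + (fun v => g v + ε * Rg v) = g + g := by
      funext v; simp [Pi.add_apply]; ring
    have e6 : (fun s v => gS s v + (-ε) * RgS s v) + (fun s v => gS s v + ε * RgS s v)
        = gS + gS := by
      funext s v; simp [Pi.add_apply]; ring
    simp only [hptdef, Prod.mk_add_mk, e1, e2, e3, e4, e5, e6]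
  exact not_extreme_of_mid (hmem (-ε) le_rfl (by linarith)) (hmem ε (by linarith) le_rfl)
    hne hmid hq
end Aux
/-- Every extreme point of the polyhedron `Q` (the feasible region of the dual of
the auxiliary maximum flow LP) has all coordinates integral. -/
theorem extremePoints_regionQ_integral [DecidableEq α]
    (G0 : FinGraph α) (G : σ → FinGraph α) (V1 V2 : Finset α)
    (hdisj : Disjoint V1 V2)
    (hWF0 : G0.WF) (hWFs : ∀ s : σ, (G s).WF)
    (hbip0 : G0.Bipartition V1 V2) (hbips : ∀ s : σ, (G s).Bipartition V1 V2)
    (q : TwoStagePt α σ × ((α → ℝ) × (σ → α → ℝ)))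
    (hq : q ∈ Set.extremePoints ℝ (regionQemb G0 G V1 V2)) :
    (∀ v, IntegralReal (q.1.1 v)) ∧ (∀ s v, IntegralReal (q.1.2.1 s v)) ∧
    (∀ s v, IntegralReal (q.1.2.2.1 s v)) ∧ (∀ s v, IntegralReal (q.1.2.2.2 s v)) ∧
    (∀ v, IntegralReal (q.2.1 v)) ∧ (∀ s v, IntegralReal (q.2.2 s v)) := by
  classical
  obtain ⟨⟨y, Y, D1, D2⟩, g, gS⟩ := q
  have hpy1 := pin_y1 G0 G V1 V2 hdisj y Y D1 D2 g gS hq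
  have hpy2 := pin_y2 G0 G V1 V2 hdisj y Y D1 D2 g gS hq
  have hpY1 := pin_Y1 G0 G V1 V2 hdisj y Y D1 D2 g gS hq
  have hpY2 := pin_Y2 G0 G V1 V2 hdisj y Y D1 D2 g gS hq
  have hpD1a := pin_D1V1 G0 G V1 V2 hdisj y Y D1 D2 g gS hq
  have hpD1b := pin_D1V2 G0 G V1 V2 hdisj y Y D1 D2 g gS hq
  have hpD2a := pin_D2V1 G0 G V1 V2 hdisj y Y D1 D2 g gS hq
  have hpD2b := pin_D2V2 G0 G V1 V2 hdisj y Y D1 D2 g gS hq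
  have hqm := hq.1
  simp only [regionQemb, regionQ, Set.mem_setOf_eq] at hqm
  obtain ⟨⟨hC1, hC2, hC3, hC4, hC5, hC6, hC7, hC8, hC9, hC10, hC11⟩, hZ1, hZ2, hZ3⟩ := hqm
  set W : Finset ℝ := insert 0 (insert 1 (G0.verts.image g)) with hWdef
  have h0W : (0:ℝ) ∈ W := Finset.mem_insert_self _ _
  have h1W : (1:ℝ) ∈ W := Finset.mem_insert_of_mem (Finset.mem_insert_self _ _)
  have hgW : ∀ v ∈ G0.verts, g v ∈ W := fun v hv =>
    Finset.mem_insert_of_mem (Finset.mem_insert_of_mem (Finset.mem_image_of_mem g hv))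
  -- every second-stage potential takes a value in `W`
  have hFact2 : ∀ s, ∀ v ∈ (G s).verts, gS s v ∈ W := by
    intro s v hv
    by_contra hW
    refine dir_lemma G0 G V1 V2 hdisj hWF0 hWFs y Y D1 D2 g gS hq (gS s v)
      (W ∪ (G s).verts.image (gS s)) (Finset.mem_union_left _ h0W)
      (Finset.mem_union_left _ h1W)
      (Finset.mem_union_right _ (Finset.mem_image_of_mem _ hv))
      (fun h => hW (by rw [h]; exact h0W)) (fun h => hW (by rw [h]; exact h1W))
      False (fun s' => s' = s) (fun h => False.elim h)
      (fun _ w hw heq => hW (heq ▸ hgW w hw))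
      (fun w hw => Finset.mem_union_left _ (hgW w hw)) ?_
      (Or.inr ⟨s, rfl, v, hv, rfl⟩)
    intro s' hs' w hw
    subst hs'
    exact Finset.mem_union_right _ (Finset.mem_image_of_mem _ hw)
  -- every first-stage potential is 0 or 1
  have hInt : ∀ v ∈ G0.verts, g v = 0 ∨ g v = 1 := by
    intro v hv
    by_contra hcon
    push_neg at hcon
    exact dir_lemma G0 G V1 V2 hdisj hWF0 hWFs y Y D1 D2 g gS hq (g v) W h0W h1W
      (hgW v hv) hcon.1 hcon.2 True (fun _ => True) (fun _ _ => trivial)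
      (fun h => absurd trivial h) hgW (fun s _ => hFact2 s) (Or.inl ⟨trivial, v, hv, rfl⟩)
  have hgI : ∀ v, IntegralReal (g v) := by
    intro v
    by_cases hv : v ∈ G0.verts
    · rcases hInt v hv with h | h
      · exact ⟨0, by simp [h]⟩
      · exact ⟨1, by simp [h]⟩
    · exact ⟨0, by simp [(hZ1 v hv).2]⟩
  have hWI : ∀ x ∈ W, IntegralReal x := by
    intro x hx
    rcases Finset.mem_insert.mp hx with h | hx2
    · exact ⟨0, by simp [h]⟩
    rcases Finset.mem_insert.mp hx2 with h | hx3
    · exact ⟨1, by simp [h]⟩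
    obtain ⟨w, hw, hwx⟩ := Finset.mem_image.mp hx3
    exact hwx ▸ hgI w
  have hgSI : ∀ s v, IntegralReal (gS s v) := by
    intro s v
    by_cases hv : v ∈ (G s).verts
    · exact hWI _ (hFact2 s v hv)
    · exact ⟨0, by simp [(hZ2 s v hv).2]⟩
  have hyI : ∀ v, IntegralReal (y v) := by
    intro v
    by_cases hv : v ∈ G0.verts
    · rcases Finset.mem_union.mp (hbip0.1 hv) with h1 | h2
      · rcases hpy1 v (Finset.mem_inter.mpr ⟨hv, h1⟩) with h | h
        · exact ⟨0, by simp [h]⟩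
        · obtain ⟨n, hn⟩ := hgI v
          exact ⟨1 - n, by push_cast; linarith⟩
      · rcases hpy2 v (Finset.mem_inter.mpr ⟨hv, h2⟩) with h | h
        · exact ⟨0, by simp [h]⟩
        · obtain ⟨n, hn⟩ := hgI v
          exact ⟨n, by rw [h, hn]⟩
    · exact ⟨0, by simp [(hZ1 v hv).1]⟩
  have hYI : ∀ s v, IntegralReal (Y s v) := by
    intro s v
    by_cases hv : v ∈ (G s).verts
    · rcases Finset.mem_union.mp ((hbips s).1 hv) with h1 | h2
      · rcases hpY1 s v (Finset.mem_inter.mpr ⟨hv, h1⟩) with h | h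
        · exact ⟨0, by simp [h]⟩
        · obtain ⟨n, hn⟩ := hgSI s v
          exact ⟨1 - n, by push_cast; linarith⟩
      · rcases hpY2 s v (Finset.mem_inter.mpr ⟨hv, h2⟩) with h | h
        · exact ⟨0, by simp [h]⟩
        · obtain ⟨n, hn⟩ := hgSI s v
          exact ⟨n, by rw [h, hn]⟩
    · exact ⟨0, by simp [(hZ2 s v hv).1]⟩
  have hD1I : ∀ s v, IntegralReal (D1 s v) := by
    intro s v
    by_cases hv : v ∈ G0.verts ∩ (G s).verts
    · have hv0 : v ∈ G0.verts := (Finset.mem_inter.mp hv).1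
      rcases Finset.mem_union.mp (hbip0.1 hv0) with h1 | h2
      · rcases hpD1a s v (Finset.mem_inter.mpr ⟨hv, h1⟩) with h | h
        · exact ⟨0, by simp [h]⟩
        · obtain ⟨n, hn⟩ := hgI v
          obtain ⟨m, hm⟩ := hgSI s v
          exact ⟨m - n, by push_cast; linarith⟩
      · rcases hpD1b s v (Finset.mem_inter.mpr ⟨hv, h2⟩) with h | h
        · exact ⟨0, by simp [h]⟩
        · obtain ⟨n, hn⟩ := hgI v
          obtain ⟨m, hm⟩ := hgSI s v
          exact ⟨n - m, by push_cast; linarith⟩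
    · exact ⟨0, by simp [(hZ3 s v hv).1]⟩
  have hD2I : ∀ s v, IntegralReal (D2 s v) := by
    intro s v
    by_cases hv : v ∈ G0.verts ∩ (G s).verts
    · have hv0 : v ∈ G0.verts := (Finset.mem_inter.mp hv).1
      rcases Finset.mem_union.mp (hbip0.1 hv0) with h1 | h2
      · rcases hpD2a s v (Finset.mem_inter.mpr ⟨hv, h1⟩) with h | h
        · exact ⟨0, by simp [h]⟩
        · obtain ⟨n, hn⟩ := hgI v
          obtain ⟨m, hm⟩ := hgSI s v
          exact ⟨n - m, by push_cast; linarith⟩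
      · rcases hpD2b s v (Finset.mem_inter.mpr ⟨hv, h2⟩) with h | h
        · exact ⟨0, by simp [h]⟩
        · obtain ⟨n, hn⟩ := hgI v
          obtain ⟨m, hm⟩ := hgSI s v
          exact ⟨m - n, by push_cast; linarith⟩
    · exact ⟨0, by simp [(hZ3 s v hv).2]⟩
  exact ⟨hyI, hYI, hD1I, hD2I, hgI, hgSI⟩
end

section
/- Every feasible solution of the relaxed LP region D extends to a feasible solution of the dual-flow polyhedron Q: if (y, (y^S), (δ^S), (d^S)) ∈ D and one defines γ_v = 1 − y_v for v ∈ V_0∩V_1, γ_v = y_v for v ∈ V_0∩V_2, γ^S_v = 1 − y^S_v for v ∈ V_S∩V_1, and γ^S_v = y^S_v for v ∈ V_S∩V_2, then the extended tuple (y, (y^S), (δ^S), (d^S), γ, (γ^S)) lies in Q. -/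
open FinGraph

variable {α σ : Type*}

/-- Every feasible solution of the relaxed region `D` extends to a feasible
solution of the dual-flow polyhedron `Q`, setting `γ_v = 1 - y_v` on `V₁` (hence on `V₀ ∩ V₁`,
resp. `V_S ∩ V₁`) and `γ_v = y_v` on `V₂` (note `V₁` and `V₂` are disjoint). -/
theorem regionD_extends_to_regionQ [DecidableEq α]
    (G0 : FinGraph α) (G : σ → FinGraph α) (V1 V2 : Finset α)
    (hdisj : Disjoint V1 V2)
    (hWF0 : G0.WF) (hWFs : ∀ s : σ, (G s).WF)
    (hbip0 : G0.Bipartition V1 V2) (hbips : ∀ s : σ, (G s).Bipartition V1 V2)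
    (p : TwoStagePt α σ) (hp : p ∈ regionD G0 G) :
    (p, (fun v => if v ∈ V1 then 1 - p.1 v else p.1 v,
         fun s v => if v ∈ V1 then 1 - p.2.1 s v else p.2.1 s v))
      ∈ regionQ G0 G V1 V2 := by
  obtain ⟨hy0, hye, hys, hdev⟩ := hp
  have hnot : ∀ v ∈ V2, v ∉ V1 := fun v hv h1 =>
    (Finset.disjoint_left.mp hdisj) h1 hv
  refine ⟨?_, ?_, ?_, ?_, ?_, ?_, ?_, ?_, hy0, fun s => (hys s).1, ?_⟩
  · intro v hv
    simp only [Finset.mem_inter] at hv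
    simp [hv.2]
  · intro s v hv
    simp only [Finset.mem_inter] at hv
    simp [hv.2]
  · intro s v hv
    simp only [Finset.mem_inter] at hv
    obtain ⟨h1, h2, h3, h4⟩ := hdev s v (Finset.mem_inter.mpr hv.1)
    simp only [hv.2, if_pos]
    constructor <;> linarith
  · intro e he h1 h2
    have := hye e he
    simp only [if_pos h1, if_neg (hnot _ h2)]
    linarith
  · intro s e he h1 h2
    have := (hys s).2 e he
    simp only [if_pos h1, if_neg (hnot _ h2)]
    linarith
  · intro v hv
    simp only [Finset.mem_inter] at hv
    simp [hnot _ hv.2]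
  · intro s v hv
    simp only [Finset.mem_inter] at hv
    simp [hnot _ hv.2]
  · intro s v hv
    simp only [Finset.mem_inter] at hv
    obtain ⟨h1, h2, h3, h4⟩ := hdev s v (Finset.mem_inter.mpr hv.1)
    simp only [if_neg (hnot _ hv.2)]
    constructor <;> linarith
  · intro s v hv
    exact ⟨(hdev s v hv).2.2.1, (hdev s v hv).2.2.2⟩
end

section
/- For every linear objective c with nonnegative coefficients on all of the variables y, (y^S), (δ^S), (d^S) (and not involving the γ variables), and every point (y, (y^S), (δ^S), (d^S), γ, (γ^S)) in the dual-flow polyhedron Q, there exists a point μ' in the region D with c(μ') ≤ c(y, (y^S), (δ^S), (d^S)). -/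
open FinGraph

variable {α σ : Type*}

lemma max_sub_max_le (a b c : ℝ) (h : a - b ≤ c) (hc : 0 ≤ c) :
    max a 0 - max b 0 ≤ c := by
  rcases max_cases a 0 with ⟨ha, ha'⟩ | ⟨ha, ha'⟩ <;>
    rcases max_cases b 0 with ⟨hb, hb'⟩ | ⟨hb, hb'⟩ <;> rw [ha, hb] <;> linarith

/-- For every linear objective `c` with nonnegative coefficients on the
variables `y, y^S, δ^S, d^S` (and not involving the `γ` variables), every point of the
dual-flow polyhedron `Q` is dominated by a point of `D`: there is `μ' ∈ D` whose objective
value is at most that of the `(y, y^S, δ^S, d^S)`-part of the given point of `Q`. -/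
theorem regionQ_dominated_by_regionD [DecidableEq α] [Fintype σ]
    (G0 : FinGraph α) (G : σ → FinGraph α) (V1 V2 : Finset α)
    (hdisj : Disjoint V1 V2)
    (hWF0 : G0.WF) (hWFs : ∀ s : σ, (G s).WF)
    (hbip0 : G0.Bipartition V1 V2) (hbips : ∀ s : σ, (G s).Bipartition V1 V2)
    (cy : α → ℝ) (cyS cδ cd : σ → α → ℝ)
    (hcy : ∀ v ∈ G0.verts, 0 ≤ cy v)
    (hcyS : ∀ s : σ, ∀ v ∈ (G s).verts, 0 ≤ cyS s v)
    (hcδ : ∀ s : σ, ∀ v ∈ G0.verts ∩ (G s).verts, 0 ≤ cδ s v)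
    (hcd : ∀ s : σ, ∀ v ∈ G0.verts ∩ (G s).verts, 0 ≤ cd s v)
    (q : TwoStagePt α σ × ((α → ℝ) × (σ → α → ℝ)))
    (hq : q ∈ regionQ G0 G V1 V2) :
    ∃ p ∈ regionD G0 G,
      objC G0 G cy cyS cδ cd p ≤ objC G0 G cy cyS cδ cd q.1 := by
  obtain ⟨h1, h2, h3, h4, h5, h6, h7, h8, h9, h10, h11⟩ := hq
  obtain ⟨⟨y, yS, dl, dd⟩, γ, γS⟩ := q
  simp only at h1 h2 h3 h4 h5 h6 h7 h8 h9 h10 h11 ⊢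
  set y' : α → ℝ := fun v => if v ∈ V1 then max (1 - γ v) 0 else max (γ v) 0 with hy'
  set yS' : σ → α → ℝ := fun s v => if v ∈ V1 then max (1 - γS s v) 0 else max (γS s v) 0
    with hyS'
  refine ⟨(y', yS', dl, dd), ⟨?_, ?_, ?_, ?_⟩, ?_⟩
  · intro v hv
    simp only [hy']
    split <;> exact le_max_right _ _
  · intro e he
    obtain ⟨he1, he2⟩ := hbip0.2 e he
    have hne : e.2 ∉ V1 := fun h => Finset.disjoint_left.1 hdisj h he2
    have hflow := h4 e he he1 he2
    simp only [hy', if_pos he1, if_neg hne]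
    have := le_max_left (1 - γ e.1) (0:ℝ)
    have := le_max_left (γ e.2) (0:ℝ)
    linarith
  · intro s
    constructor
    · intro v hv
      simp only [hyS']
      split <;> exact le_max_right _ _
    · intro e he
      obtain ⟨he1, he2⟩ := (hbips s).2 e he
      have hne : e.2 ∉ V1 := fun h => Finset.disjoint_left.1 hdisj h he2
      have hflow := h5 s e he he1 he2
      simp only [hyS', if_pos he1, if_neg hne]
      have := le_max_left (1 - γS s e.1) (0:ℝ)
      have := le_max_left (γS s e.2) (0:ℝ)
      linarith
  · intro s v hv
    obtain ⟨hd1, hd2⟩ := h11 s v hv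
    simp only [Finset.mem_inter] at hv
    have hv12 : v ∈ V1 ∪ V2 := hbip0.1 hv.1
    simp only [hy', hyS']
    rcases Finset.mem_union.1 hv12 with hv1 | hv2
    · have h3' := h3 s v (Finset.mem_inter.2 ⟨Finset.mem_inter.2 hv, hv1⟩)
      simp only [if_pos hv1]
      exact ⟨max_sub_max_le _ _ _ (by linarith [h3'.1]) hd1,
        max_sub_max_le _ _ _ (by linarith [h3'.2]) hd2, hd1, hd2⟩
    · have hnv1 : v ∉ V1 := fun h => Finset.disjoint_left.1 hdisj h hv2
      have h8' := h8 s v (Finset.mem_inter.2 ⟨Finset.mem_inter.2 hv, hv2⟩)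
      simp only [if_neg hnv1]
      exact ⟨max_sub_max_le _ _ _ (by linarith [h8'.2]) hd1,
        max_sub_max_le _ _ _ (by linarith [h8'.1]) hd2, hd1, hd2⟩
  · unfold objC
    simp only
    gcongr with v hv s _ v hv
    · exact hcy v hv
    · simp only [hy']
      have hv12 : v ∈ V1 ∪ V2 := hbip0.1 hv
      rcases Finset.mem_union.1 hv12 with hv1 | hv2
      · rw [if_pos hv1]
        exact max_le (by linarith [h1 v (Finset.mem_inter.2 ⟨hv, hv1⟩)]) (h9 v hv)
      · have hnv1 : v ∉ V1 := fun h => Finset.disjoint_left.1 hdisj h hv2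
        rw [if_neg hnv1]
        exact max_le (by linarith [h6 v (Finset.mem_inter.2 ⟨hv, hv2⟩)]) (h9 v hv)
    · exact hcyS s v hv
    · simp only [hyS']
      have hv12 : v ∈ V1 ∪ V2 := (hbips s).1 hv
      rcases Finset.mem_union.1 hv12 with hv1 | hv2
      · rw [if_pos hv1]
        exact max_le (by linarith [h2 s v (Finset.mem_inter.2 ⟨hv, hv1⟩)]) (h10 s v hv)
      · have hnv1 : v ∉ V1 := fun h => Finset.disjoint_left.1 hdisj h hv2
        rw [if_neg hnv1]
        exact max_le (by linarith [h7 s v (Finset.mem_inter.2 ⟨hv, hv2⟩)]) (h10 s v hv)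
end

section
/- For every linear objective c with nonnegative coefficients on all of the variables y, (y^S), (δ^S), (d^S) (and not involving the γ variables), the infimum of c over the region D equals the infimum of c over the dual-flow polyhedron Q; in particular, from an optimal solution of the LP min{c over Q} one obtains an optimal solution of the LP min{c over D}. -/
open FinGraph

variable {α σ : Type*}

private lemma aux_max_sub (a b c : ℝ) (h1 : a - b ≤ c) (h2 : 0 ≤ c) :
    max 0 a - max 0 b ≤ c := by
  have hb0 : (0:ℝ) ≤ max 0 b := le_max_left 0 b
  have hbb : b ≤ max 0 b := le_max_right 0 b
  have : max 0 a ≤ max 0 b + c := max_le (by linarith) (by linarith)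
  linarith

/-- For every linear objective `c` with nonnegative coefficients on the
variables `y, y^S, δ^S, d^S` (and not involving the `γ` variables), the infimum of `c` over the
region `D` equals the infimum of `c` over the dual-flow polyhedron `Q`. -/
theorem sInf_objC_regionD_eq_regionQ [DecidableEq α] [Fintype σ]
    (G0 : FinGraph α) (G : σ → FinGraph α) (V1 V2 : Finset α)
    (hdisj : Disjoint V1 V2)
    (hWF0 : G0.WF) (hWFs : ∀ s : σ, (G s).WF)
    (hbip0 : G0.Bipartition V1 V2) (hbips : ∀ s : σ, (G s).Bipartition V1 V2)
    (cy : α → ℝ) (cyS cδ cd : σ → α → ℝ)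
    (hcy : ∀ v ∈ G0.verts, 0 ≤ cy v)
    (hcyS : ∀ s : σ, ∀ v ∈ (G s).verts, 0 ≤ cyS s v)
    (hcδ : ∀ s : σ, ∀ v ∈ G0.verts ∩ (G s).verts, 0 ≤ cδ s v)
    (hcd : ∀ s : σ, ∀ v ∈ G0.verts ∩ (G s).verts, 0 ≤ cd s v) :
    sInf (objC G0 G cy cyS cδ cd '' regionD G0 G) =
      sInf ((fun q => objC G0 G cy cyS cδ cd q.1) '' regionQ G0 G V1 V2) := by
  classical
  set c := objC G0 G cy cyS cδ cd with hcdef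
  -- nonnegativity of the objective, given pointwise nonnegativity of the variables
  have hobj_nonneg : ∀ p : TwoStagePt α σ,
      (∀ v ∈ G0.verts, 0 ≤ p.1 v) →
      (∀ s : σ, ∀ v ∈ (G s).verts, 0 ≤ p.2.1 s v) →
      (∀ s : σ, ∀ v ∈ G0.verts ∩ (G s).verts, 0 ≤ p.2.2.1 s v ∧ 0 ≤ p.2.2.2 s v) →
      0 ≤ c p := by
    intro p h1 h2 h3
    refine add_nonneg (add_nonneg ?_ ?_) ?_
    · exact Finset.sum_nonneg fun v hv => mul_nonneg (hcy v hv) (h1 v hv)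
    · exact Finset.sum_nonneg fun s _ => Finset.sum_nonneg fun v hv =>
        mul_nonneg (hcyS s v hv) (h2 s v hv)
    · refine Finset.sum_nonneg fun s _ => Finset.sum_nonneg fun v hv => add_nonneg
        (mul_nonneg (hcδ s v hv) ((h3 s v hv).1)) (mul_nonneg (hcd s v hv) ((h3 s v hv).2))
  have hV2notV1 : ∀ v ∈ V2, v ∉ V1 := fun v hv2 hv1 =>
    (Finset.disjoint_left.mp hdisj hv1) hv2
  -- a canonical point of D
  have hp0 : ((fun _ => 1, fun _ _ => 1, fun _ _ => 0, fun _ _ => 0) : TwoStagePt α σ)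
      ∈ regionD G0 G := by
    refine ⟨fun v _ => zero_le_one, fun e _ => by norm_num, fun s => ⟨fun v _ => zero_le_one,
      fun e _ => by norm_num⟩, fun s v _ => by norm_num⟩
  -- Lift: every point of D extends to a point of Q with the same objective value.
  have hlift : ∀ p ∈ regionD G0 G,
      (p, ((fun v => if v ∈ V1 then 1 - p.1 v else p.1 v : α → ℝ),
        (fun s v => if v ∈ V1 then 1 - p.2.1 s v else p.2.1 s v : σ → α → ℝ)))
        ∈ regionQ G0 G V1 V2 := by
    rintro p ⟨h1, h2, h3, h4⟩
    refine ⟨?_, ?_, ?_, ?_, ?_, ?_, ?_, ?_, h1, fun s => (h3 s).1, fun s v hv => ⟨(h4 s v hv).2.2.1, (h4 s v hv).2.2.2⟩⟩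
    · intro v hv
      rw [Finset.mem_inter] at hv
      simp only [if_pos hv.2]; linarith
    · intro s v hv
      rw [Finset.mem_inter] at hv
      simp only [if_pos hv.2]; linarith
    · intro s v hv
      rw [Finset.mem_inter] at hv
      obtain ⟨hd1, hd2, _, _⟩ := h4 s v hv.1
      simp only [if_pos hv.2]
      constructor <;> linarith
    · intro e he he1 he2
      have := h2 e he
      simp only [if_pos he1, if_neg (hV2notV1 _ he2)]
      linarith
    · intro s e he he1 he2
      have := (h3 s).2 e he
      simp only [if_pos he1, if_neg (hV2notV1 _ he2)]
      linarith
    · intro v hv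
      rw [Finset.mem_inter] at hv
      simp only [if_neg (hV2notV1 _ hv.2)]; linarith
    · intro s v hv
      rw [Finset.mem_inter] at hv
      simp only [if_neg (hV2notV1 _ hv.2)]; linarith
    · intro s v hv
      rw [Finset.mem_inter] at hv
      obtain ⟨hd1, hd2, _, _⟩ := h4 s v hv.1
      simp only [if_neg (hV2notV1 _ hv.2)]
      constructor <;> linarith
  -- Project: every point of Q dominates a point of D.
  have hproj : ∀ q ∈ regionQ G0 G V1 V2, ∃ p ∈ regionD G0 G, c p ≤ c q.1 := by
    rintro ⟨⟨y, yS, dl, dd⟩, ⟨ga, gaS⟩⟩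
      ⟨hq1, hq2, hq3, hq4, hq5, hq6, hq7, hq8, hq9, hq10, hq11⟩
    refine ⟨((fun v => if v ∈ V1 then max 0 (1 - ga v) else max 0 (ga v)),
      (fun s v => if v ∈ V1 then max 0 (1 - gaS s v) else max 0 (gaS s v)), dl, dd), ?_, ?_⟩
    · refine ⟨fun v _ => by dsimp only; split <;> exact le_max_left _ _,
        ?_, fun s => ⟨fun v _ => by dsimp only; split <;> exact le_max_left _ _, ?_⟩, ?_⟩
      · intro e he
        obtain ⟨he1, he2⟩ := hbip0.2 e he
        have hmon := hq4 e he he1 he2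
        simp only [if_pos he1, if_neg (hV2notV1 _ he2)]
        have a1 : 1 - ga e.1 ≤ max 0 (1 - ga e.1) := le_max_right _ _
        have a2 : ga e.2 ≤ max 0 (ga e.2) := le_max_right _ _
        linarith
      · intro e he
        obtain ⟨he1, he2⟩ := (hbips s).2 e he
        have hmon := hq5 s e he he1 he2
        simp only [if_pos he1, if_neg (hV2notV1 _ he2)]
        have a1 : 1 - gaS s e.1 ≤ max 0 (1 - gaS s e.1) := le_max_right _ _
        have a2 : gaS s e.2 ≤ max 0 (gaS s e.2) := le_max_right _ _
        linarith
      · intro s v hv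
        obtain ⟨hdl0, hdd0⟩ := hq11 s v hv
        refine ⟨?_, ?_, hdl0, hdd0⟩
        · have hv12 : v ∈ V1 ∪ V2 := hbip0.1 (Finset.mem_inter.mp hv).1
          rcases Finset.mem_union.mp hv12 with hv1 | hv2
          · obtain ⟨hA, _⟩ := hq3 s v (Finset.mem_inter.mpr ⟨hv, hv1⟩)
            simp only [if_pos hv1]
            exact aux_max_sub _ _ _ (by linarith) hdl0
          · have hnv1 := hV2notV1 _ hv2
            obtain ⟨hA, _⟩ := hq8 s v (Finset.mem_inter.mpr ⟨hv, hv2⟩)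
            simp only [if_neg hnv1]
            exact aux_max_sub _ _ _ (by linarith) hdl0
        · have hv12 : v ∈ V1 ∪ V2 := hbip0.1 (Finset.mem_inter.mp hv).1
          rcases Finset.mem_union.mp hv12 with hv1 | hv2
          · obtain ⟨_, hB⟩ := hq3 s v (Finset.mem_inter.mpr ⟨hv, hv1⟩)
            simp only [if_pos hv1]
            exact aux_max_sub _ _ _ (by linarith) hdd0
          · have hnv1 := hV2notV1 _ hv2
            obtain ⟨_, hB⟩ := hq8 s v (Finset.mem_inter.mpr ⟨hv, hv2⟩)
            simp only [if_neg hnv1]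
            exact aux_max_sub _ _ _ (by linarith) hdd0
    · simp only [hcdef, objC]
      refine add_le_add (add_le_add ?_ ?_) le_rfl
      · refine Finset.sum_le_sum fun v hv => ?_
        refine mul_le_mul_of_nonneg_left ?_ (hcy v hv)
        rcases Finset.mem_union.mp (hbip0.1 hv) with hv1 | hv2
        · simp only [if_pos hv1]
          have := hq1 v (Finset.mem_inter.mpr ⟨hv, hv1⟩)
          exact max_le (hq9 v hv) (by linarith)
        · simp only [if_neg (hV2notV1 _ hv2)]
          have := hq6 v (Finset.mem_inter.mpr ⟨hv, hv2⟩)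
          exact max_le (hq9 v hv) (by linarith)
      · refine Finset.sum_le_sum fun s _ => Finset.sum_le_sum fun v hv => ?_
        refine mul_le_mul_of_nonneg_left ?_ (hcyS s v hv)
        rcases Finset.mem_union.mp ((hbips s).1 hv) with hv1 | hv2
        · simp only [if_pos hv1]
          have := hq2 s v (Finset.mem_inter.mpr ⟨hv, hv1⟩)
          exact max_le (hq10 s v hv) (by linarith)
        · simp only [if_neg (hV2notV1 _ hv2)]
          have := hq7 s v (Finset.mem_inter.mpr ⟨hv, hv2⟩)
          exact max_le (hq10 s v hv) (by linarith)
  -- image of D is contained in image of Q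
  have hsub : c '' regionD G0 G ⊆ (fun q => c q.1) '' regionQ G0 G V1 V2 := by
    rintro a ⟨p, hp, rfl⟩
    exact ⟨_, hlift p hp, rfl⟩
  have hAne : (c '' regionD G0 G).Nonempty := ⟨_, _, hp0, rfl⟩
  have hBne : ((fun q => c q.1) '' regionQ G0 G V1 V2).Nonempty := hAne.mono hsub
  have hbddA : BddBelow (c '' regionD G0 G) := by
    refine ⟨0, ?_⟩
    rintro a ⟨p, ⟨h1, _, h3, h4⟩, rfl⟩
    exact hobj_nonneg p h1 (fun s => (h3 s).1) (fun s v hv => ⟨(h4 s v hv).2.2.1, (h4 s v hv).2.2.2⟩)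
  have hbddB : BddBelow ((fun q => c q.1) '' regionQ G0 G V1 V2) := by
    refine ⟨0, ?_⟩
    rintro a ⟨q, ⟨_, _, _, _, _, _, _, _, hq9, hq10, hq11⟩, rfl⟩
    exact hobj_nonneg q.1 hq9 hq10 hq11
  apply le_antisymm
  · refine le_csInf hBne ?_
    rintro b ⟨q, hq, rfl⟩
    obtain ⟨p, hp, hle⟩ := hproj q hq
    exact le_trans (csInf_le hbddA ⟨p, hp, rfl⟩) hle
  · exact le_csInf hAne fun a ha => csInf_le hbddB (hsub ha)
end

section
/- Let α ∈ ℝ^{V_0}, α^S ∈ ℝ^{V_S} be arbitrary, β^S, b^S ∈ ℝ^{V_0∩V_S} nonnegative, and set ε = 1/(1 + Σ_{v∈V_0}|α_v| + Σ_{S∈𝒮}Σ_{v∈V_S}|α^S_v| + Σ_{S∈𝒮}Σ_{v∈V_0∩V_S}(β^S_v + b^S_v)). If μ̂ = (ŷ, (ŷ^S), (δ̂^S), (d̂^S)) is an integral (all coordinates integer) minimizer over the region D of the objective F_ε(μ) = Σ_{v∈V_0} y_v + Σ_{S∈𝒮}Σ_{v∈V_S} y^S_v + ε·(Σ_{v∈V_0}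 α_v y_v + Σ_{S∈𝒮}Σ_{v∈V_S} α^S_v y^S_v + Σ_{S∈𝒮}Σ_{v∈V_0∩V_S} (β^S_v δ^S_v + b^S_v d^S_v)), then μ̂ satisfies Σ_{v∈V_0} ŷ_v = ν(G_0) and Σ_{v∈V_S} ŷ^S_v = ν(G_S) for all S∈𝒮 (hence μ̂ ∈ P), and μ̂ minimizes the objective G(μ) = Σ_{v∈V_0} α_v y_v + Σ_{S∈𝒮}Σ_{v∈V_S} α^S_v y^S_v + Σ_{S∈𝒮}Σ_{v∈V_0∩V_S} (β^S_v δ^S_v + b^S_v d^S_v) over P. -/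
open FinGraph

namespace FinGraph

section Aux
variable {α : Type*} [DecidableEq α]

lemma empty_isMatching (G : FinGraph α) : G.IsMatching ∅ :=
  ⟨Finset.empty_subset _, by simp⟩

lemma le_nu_of_matching {G : FinGraph α} {M : Finset (α × α)} (h : G.IsMatching M) :
    M.card ≤ G.nu := by
  unfold FinGraph.nu
  apply Finset.le_sup (f := Finset.card)
  simp only [Finset.mem_filter, Finset.mem_powerset]
  exact ⟨h.1, h⟩

lemma nu_le_of_forall {G : FinGraph α} {n : ℕ}
    (h : ∀ M, G.IsMatching M → M.card ≤ n) : G.nu ≤ n := by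
  unfold FinGraph.nu
  apply Finset.sup_le
  intro M hM
  simp only [Finset.mem_filter, Finset.mem_powerset] at hM
  exact h M hM.2

lemma exists_matching_card_nu (G : FinGraph α) :
    ∃ M, G.IsMatching M ∧ M.card = G.nu := by
  classical
  unfold FinGraph.nu
  have hne : (G.edges.powerset.filter fun M => G.IsMatching M).Nonempty :=
    ⟨∅, by simp [G.empty_isMatching]⟩
  obtain ⟨M, hM, hcard⟩ := Finset.exists_mem_eq_sup _ hne Finset.card
  exact ⟨M, (Finset.mem_filter.mp hM).2, hcard.symm⟩

lemma nu_le_card_cover {G : FinGraph α} {C : Finset α}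
    (hC : ∀ e ∈ G.edges, e.1 ∈ C ∨ e.2 ∈ C) : G.nu ≤ C.card := by
  classical
  apply nu_le_of_forall
  intro M hM
  set g : α × α → α := fun e => if e.1 ∈ C then e.1 else e.2 with hg
  have himg : M.image g ⊆ C := by
    intro x hx
    simp only [Finset.mem_image] at hx
    obtain ⟨e, he, rfl⟩ := hx
    by_cases h : e.1 ∈ C
    · simpa [hg, h] using h
    · have := hC e (hM.1 he)
      simp only [hg, if_neg h]
      tauto
  have hinj : Set.InjOn g M := by
    intro e he f hf hef
    by_contra hne
    obtain ⟨h1, h2, h3, h4⟩ := hM.2 e he f hf hne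
    have hge : g e = e.1 ∨ g e = e.2 := by by_cases h : e.1 ∈ C <;> simp [hg, h]
    have hgf : g f = f.1 ∨ g f = f.2 := by by_cases h : f.1 ∈ C <;> simp [hg, h]
    rcases hge with h | h <;> rcases hgf with h' | h' <;> rw [h, h'] at hef <;> tauto
  calc M.card = (M.image g).card := (Finset.card_image_of_injOn hinj).symm
    _ ≤ C.card := Finset.card_le_card himg

lemma nu_le_sum {G : FinGraph α} (hWF : G.WF) {y : α → ℝ}
    (h0 : ∀ v ∈ G.verts, 0 ≤ y v) (hc : ∀ e ∈ G.edges, 1 ≤ y e.1 + y e.2) :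
    (G.nu : ℝ) ≤ ∑ v ∈ G.verts, y v := by
  obtain ⟨M, hM, hcard⟩ := G.exists_matching_card_nu
  set VM := M.biUnion (fun e => {e.1, e.2}) with hVM
  have hsub : VM ⊆ G.verts := by
    intro v hv
    simp only [hVM, Finset.mem_biUnion, Finset.mem_insert, Finset.mem_singleton] at hv
    obtain ⟨e, he, h⟩ := hv
    have := hWF e (hM.1 he)
    rcases h with rfl | rfl
    exacts [this.1, this.2.1]
  have hdisj : (↑M : Set (α × α)).PairwiseDisjoint (fun e => ({e.1, e.2} : Finset α)) := by
    intro e he f hf hne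
    obtain ⟨h1, h2, h3, h4⟩ := hM.2 e he f hf hne
    simp only [Finset.disjoint_left, Finset.mem_insert, Finset.mem_singleton]
    rintro x (rfl | rfl) <;> rintro (h | h) <;> tauto
  have hsum : ∑ v ∈ VM, y v = ∑ e ∈ M, (y e.1 + y e.2) := by
    rw [hVM, Finset.sum_biUnion hdisj]
    refine Finset.sum_congr rfl fun e he => ?_
    rw [Finset.sum_pair (hWF e (hM.1 he)).2.2]
  calc (G.nu : ℝ) = (M.card : ℝ) := by rw [hcard]
    _ = ∑ _e ∈ M, (1 : ℝ) := by simp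
    _ ≤ ∑ e ∈ M, (y e.1 + y e.2) := Finset.sum_le_sum fun e he => hc e (hM.1 he)
    _ = ∑ v ∈ VM, y v := hsum.symm
    _ ≤ ∑ v ∈ G.verts, y v :=
        Finset.sum_le_sum_of_subset_of_nonneg hsub (fun v hv _ => h0 v hv)

end Aux
end FinGraph
set_option linter.unusedSectionVars false

namespace FinGraph

section Konig
variable {α : Type*} [DecidableEq α]

lemma konig (G : FinGraph α) {V1 V2 : Finset α} (hdisj : Disjoint V1 V2)
    (hWF : G.WF) (hbip : G.Bipartition V1 V2) :
    ∃ C : Finset α, C ⊆ G.verts ∧ (∀ e ∈ G.edges, e.1 ∈ C ∨ e.2 ∈ C) ∧ C.card = G.nu := by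
  classical
  set N : α → Finset α := fun v => (G.edges.filter (fun e => e.1 = v)).image Prod.snd with hN
  have hNmem : ∀ v w, w ∈ N v ↔ (v, w) ∈ G.edges := by
    intro v w
    simp only [hN, Finset.mem_image, Finset.mem_filter]
    constructor
    · rintro ⟨⟨e1, e2⟩, ⟨he, rfl⟩, rfl⟩
      exact he
    · intro h
      exact ⟨(v, w), ⟨h, rfl⟩, rfl⟩
  set L : Finset α := V1 ∩ G.verts with hL
  have hpow : L.powerset.Nonempty := ⟨∅, by simp⟩
  set df : Finset α → ℤ := fun A => (A.card : ℤ) - ((A.biUnion N).card : ℤ) with hdf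
  set d : ℤ := L.powerset.sup' hpow df with hd
  obtain ⟨A₀, hA₀mem, hA₀⟩ := Finset.exists_mem_eq_sup' hpow df
  have hA₀L : A₀ ⊆ L := Finset.mem_powerset.mp hA₀mem
  have hdmax : ∀ A ⊆ L, df A ≤ d := fun A hA => Finset.le_sup' df (Finset.mem_powerset.mpr hA)
  have hd0 : 0 ≤ d := le_trans (by simp [hdf]) (hdmax ∅ (Finset.empty_subset L))
  set dn : ℕ := d.toNat with hdn
  have hddn : d = (dn : ℤ) := (Int.toNat_of_nonneg hd0).symm
  set D : Finset (α ⊕ ℕ) := (Finset.range dn).image Sum.inr with hD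
  have hDcard : D.card = dn := by
    rw [hD, Finset.card_image_of_injective _ Sum.inr_injective, Finset.card_range]
  set t : {x // x ∈ L} → Finset (α ⊕ ℕ) := fun v => (N ↑v).image Sum.inl ∪ D with ht
  -- Hall condition
  have hHall : ∀ s : Finset {x // x ∈ L}, s.card ≤ (s.biUnion t).card := by
    intro s
    rcases s.eq_empty_or_nonempty with rfl | hs
    · simp
    set s' : Finset α := s.image Subtype.val with hs'
    have hcard' : s'.card = s.card := Finset.card_image_of_injective _ Subtype.val_injective
    have hsubL : s' ⊆ L := by
      intro a ha
      obtain ⟨v, hv, rfl⟩ := Finset.mem_image.mp ha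
      exact v.2
    have h1 : (s'.biUnion N).image Sum.inl ∪ D ⊆ s.biUnion t := by
      intro x hx
      rcases Finset.mem_union.mp hx with hx | hx
      · obtain ⟨w, hw, rfl⟩ := Finset.mem_image.mp hx
        obtain ⟨a, ha, hwa⟩ := Finset.mem_biUnion.mp hw
        obtain ⟨v, hv, rfl⟩ := Finset.mem_image.mp ha
        exact Finset.mem_biUnion.mpr
          ⟨v, hv, Finset.mem_union_left _ (Finset.mem_image_of_mem _ hwa)⟩
      · obtain ⟨v, hv⟩ := hs
        exact Finset.mem_biUnion.mpr ⟨v, hv, Finset.mem_union_right _ hx⟩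
    have hdisjID : Disjoint ((s'.biUnion N).image Sum.inl) D := by
      rw [hD, Finset.disjoint_left]
      rintro x hx hx'
      obtain ⟨w, _, rfl⟩ := Finset.mem_image.mp hx
      obtain ⟨j, _, hj⟩ := Finset.mem_image.mp hx'
      exact Sum.inr_ne_inl hj
    have h2 : (s'.biUnion N).card + dn ≤ (s.biUnion t).card := by
      have hc := Finset.card_le_card h1
      rwa [Finset.card_union_of_disjoint hdisjID,
        Finset.card_image_of_injective _ Sum.inl_injective, hDcard] at hc
    have h3 : (s'.card : ℤ) ≤ ((s'.biUnion N).card : ℤ) + d := by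
      have := hdmax s' hsubL
      simp only [hdf] at this
      omega
    omega
  obtain ⟨f, hfinj, hft⟩ := (Finset.all_card_le_biUnion_card_iff_exists_injective t).mp hHall
  set T : Finset {x // x ∈ L} := Finset.univ.filter (fun v => (f v).isLeft) with hT
  set g : {x // x ∈ L} → α := fun v => Sum.elim id (fun _ => (v : α)) (f v) with hg
  have hgT : ∀ v ∈ T, f v = Sum.inl (g v) ∧ g v ∈ N ↑v := by
    intro v hv
    have hleft : (f v).isLeft := by
      have := (Finset.mem_filter.mp hv).2
      simpa using this
    obtain ⟨w, hw⟩ := Sum.isLeft_iff.mp hleft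
    have hgw : g v = w := by rw [hg]; simp [hw]
    have hmem := hft v
    rw [hw] at hmem
    rcases Finset.mem_union.mp hmem with h | h
    · obtain ⟨w', hw', hww⟩ := Finset.mem_image.mp h
      refine ⟨by rw [hw, hgw], ?_⟩
      rw [hgw, ← Sum.inl.inj hww]
      exact hw'
    · exfalso
      rw [hD] at h
      obtain ⟨j, _, hj⟩ := Finset.mem_image.mp h
      exact Sum.inr_ne_inl hj
  -- T is big
  have hTc : (Finset.univ.filter (fun v : {x // x ∈ L} => ¬ (f v).isLeft)).card ≤ dn := by
    have himg : (Finset.univ.filter (fun v : {x // x ∈ L} => ¬ (f v).isLeft)).image f ⊆ D := by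
      intro x hx
      obtain ⟨v, hv, rfl⟩ := Finset.mem_image.mp hx
      have hnl := (Finset.mem_filter.mp hv).2
      rcases Finset.mem_union.mp (hft v) with h | h
      · exfalso
        obtain ⟨w, _, hw⟩ := Finset.mem_image.mp h
        rw [← hw] at hnl
        simp at hnl
      · exact h
    calc (Finset.univ.filter (fun v : {x // x ∈ L} => ¬ (f v).isLeft)).card
        = ((Finset.univ.filter (fun v : {x // x ∈ L} => ¬ (f v).isLeft)).image f).card :=
          (Finset.card_image_of_injective _ hfinj).symm
      _ ≤ D.card := Finset.card_le_card himg
      _ = dn := hDcard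
  have hsplit : T.card + (Finset.univ.filter (fun v : {x // x ∈ L} => ¬ (f v).isLeft)).card
      = L.card := by
    rw [hT]
    rw [Finset.card_filter_add_card_filter_not]
    simp [Fintype.card_coe]
  have hTcard : (L.card : ℤ) - d ≤ (T.card : ℤ) := by omega
  -- the matching
  set M : Finset (α × α) := T.image (fun v : {x // x ∈ L} => ((v : α), g v)) with hM
  have hMcard : M.card = T.card := by
    rw [hM]
    apply Finset.card_image_of_injective
    intro u v huv
    exact Subtype.ext (congrArg Prod.fst huv)
  have hMsub : M ⊆ G.edges := by
    intro e he
    obtain ⟨v, hv, rfl⟩ := Finset.mem_image.mp he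
    exact (hNmem _ _).mp (hgT v hv).2
  have hV1 : ∀ w : {x // x ∈ L}, (w : α) ∈ V1 := fun w => (Finset.mem_inter.mp w.2).1
  have hV2 : ∀ w ∈ T, g w ∈ V2 := fun w hw => (hbip.2 _ ((hNmem _ _).mp (hgT w hw).2)).2
  have hMmatch : G.IsMatching M := by
    refine ⟨hMsub, ?_⟩
    rintro e he f' hf' hne
    obtain ⟨u, hu, rfl⟩ := Finset.mem_image.mp he
    obtain ⟨v, hv, rfl⟩ := Finset.mem_image.mp hf'
    have huv : u ≠ v := fun h => hne (by rw [h])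
    refine ⟨fun h => huv (Subtype.ext h), ?_, ?_, ?_⟩
    · intro h
      replace h : (↑u : α) = g v := h
      exact Finset.disjoint_left.mp hdisj (hV1 u) (h ▸ hV2 v hv)
    · intro h
      replace h : g u = (↑v : α) := h
      exact Finset.disjoint_left.mp hdisj (hV1 v) (h.symm ▸ hV2 u hu)
    · intro h
      replace h : g u = g v := h
      exact huv (hfinj (by rw [(hgT u hu).1, (hgT v hv).1, h]))
  have hnuM : M.card ≤ G.nu := le_nu_of_matching hMmatch
  -- the cover
  set C : Finset α := (L \ A₀) ∪ (A₀.biUnion N) with hC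
  have hNverts : A₀.biUnion N ⊆ G.verts := by
    intro w hw
    obtain ⟨v, hv, hwv⟩ := Finset.mem_biUnion.mp hw
    exact (hWF _ ((hNmem v w).mp hwv)).2.1
  have hCsub : C ⊆ G.verts := by
    intro x hx
    rcases Finset.mem_union.mp hx with h | h
    · exact (Finset.mem_inter.mp ((Finset.mem_sdiff.mp h).1)).2
    · exact hNverts h
  have hCcover : ∀ e ∈ G.edges, e.1 ∈ C ∨ e.2 ∈ C := by
    intro e he
    have he1L : e.1 ∈ L := Finset.mem_inter.mpr ⟨(hbip.2 e he).1, (hWF e he).1⟩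
    by_cases h : e.1 ∈ A₀
    · right
      refine Finset.mem_union_right _ (Finset.mem_biUnion.mpr ⟨e.1, h, ?_⟩)
      refine (hNmem e.1 e.2).mpr ?_
      rw [Prod.mk.eta]
      exact he
    · exact Or.inl (Finset.mem_union_left _ (Finset.mem_sdiff.mpr ⟨he1L, h⟩))
  have hNV2 : A₀.biUnion N ⊆ V2 := by
    intro w hw
    obtain ⟨v, hv, hwv⟩ := Finset.mem_biUnion.mp hw
    exact (hbip.2 _ ((hNmem v w).mp hwv)).2
  have hLV1 : L \ A₀ ⊆ V1 := fun x hx =>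
    (Finset.mem_inter.mp ((Finset.mem_sdiff.mp hx).1)).1
  have hdisjC : Disjoint (L \ A₀) (A₀.biUnion N) := hdisj.mono hLV1 hNV2
  have hALe : A₀.card ≤ L.card := Finset.card_le_card hA₀L
  have hdA : d = (A₀.card : ℤ) - ((A₀.biUnion N).card : ℤ) := by rw [hd, hA₀]
  have hCcard : (C.card : ℤ) = (L.card : ℤ) - d := by
    rw [hC, Finset.card_union_of_disjoint hdisjC, Finset.card_sdiff_of_subset hA₀L]
    omega
  have hnuC : G.nu ≤ C.card := nu_le_card_cover hCcover
  exact ⟨C, hCsub, hCcover, by omega⟩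

lemma exists_cover_fn (G : FinGraph α) {V1 V2 : Finset α} (hdisj : Disjoint V1 V2)
    (hWF : G.WF) (hbip : G.Bipartition V1 V2) :
    ∃ y : α → ℝ, (∀ v, 0 ≤ y v) ∧ (∀ v, y v ≤ 1) ∧
      (∀ e ∈ G.edges, 1 ≤ y e.1 + y e.2) ∧ ∑ v ∈ G.verts, y v = (G.nu : ℝ) := by
  classical
  obtain ⟨C, hCsub, hCcov, hCcard⟩ := G.konig hdisj hWF hbip
  refine ⟨fun v => if v ∈ C then 1 else 0, fun v => by positivity,
    fun v => by dsimp only; split <;> norm_num, fun e he => ?_, ?_⟩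
  · rcases hCcov e he with h | h
    · have : (0:ℝ) ≤ if e.2 ∈ C then 1 else 0 := by positivity
      simp only [if_pos h]; linarith
    · have : (0:ℝ) ≤ if e.1 ∈ C then 1 else 0 := by positivity
      simp only [if_pos h]; linarith
  · rw [Finset.sum_ite_mem, Finset.inter_eq_right.mpr hCsub, ← hCcard]
    simp

end Konig
end FinGraph

section MainHelpers

lemma min1_cover {x y : ℝ} (hx : 0 ≤ x) (hy : 0 ≤ y) (h : 1 ≤ x + y) :
    1 ≤ min x 1 + min y 1 := by
  rcases le_total x 1 with h1 | h1
  · rcases le_total y 1 with h2 | h2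
    · rw [min_eq_left h1, min_eq_left h2]; exact h
    · rw [min_eq_right h2]
      have : 0 ≤ min x 1 := le_min hx zero_le_one
      linarith
  · rw [min_eq_right h1]
    have : 0 ≤ min y 1 := le_min hy zero_le_one
    linarith

lemma min1_lip {x y δ : ℝ} (h : x - y ≤ δ) (hδ : 0 ≤ δ) : min x 1 - min y 1 ≤ δ := by
  rcases le_total x 1 with h1 | h1 <;> rcases le_total y 1 with h2 | h2
  · rw [min_eq_left h1, min_eq_left h2]; exact h
  · rw [min_eq_left h1, min_eq_right h2]; linarith
  · rw [min_eq_right h1, min_eq_left h2]; linarith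
  · rw [min_eq_right h1, min_eq_right h2]; linarith

lemma integralSum {γ : Type*} (s : Finset γ) (f : γ → ℝ)
    (h : ∀ x ∈ s, IntegralReal (f x)) : IntegralReal (∑ x ∈ s, f x) := by
  have h' : ∀ x : {y // y ∈ s}, ∃ n : ℤ, f x = (n : ℝ) := fun x => h x x.2
  choose g hg using h'
  refine ⟨∑ x ∈ s.attach, g x, ?_⟩
  rw [← Finset.sum_attach s f]
  push_cast
  exact Finset.sum_congr rfl fun x _ => hg x

lemma IntegralReal.add {x y : ℝ} (hx : IntegralReal x) (hy : IntegralReal y) :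
    IntegralReal (x + y) := by
  obtain ⟨n, rfl⟩ := hx
  obtain ⟨m, rfl⟩ := hy
  exact ⟨n + m, by push_cast; ring⟩

end MainHelpers

variable {α σ : Type*}

/-- Let `a, a^S` be arbitrary and `β^S, b^S` nonnegative coefficient vectors,
and let `ε = 1/(1 + Σ|a| + ΣΣ|a^S| + ΣΣ(β^S + b^S))`.  If `μ̂` is an integral minimizer over the
region `D` of the objective
`F_ε(μ) = Σ_{V₀} y + Σ_S Σ_{V_S} y^S + ε·(Σ a y + Σ_S Σ a^S y^S + Σ_S Σ (β^S δ^S + b^S d^S))`,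
then `μ̂` satisfies the matching-number equalities (hence `μ̂ ∈ P`) and minimizes
`G(μ) = Σ a y + Σ_S Σ a^S y^S + Σ_S Σ (β^S δ^S + b^S d^S)` over `P`. -/
theorem integral_minimizer_regionD_minimizes_regionP [DecidableEq α] [Fintype σ]
    (G0 : FinGraph α) (G : σ → FinGraph α) (V1 V2 : Finset α)
    (hdisj : Disjoint V1 V2)
    (hWF0 : G0.WF) (hWFs : ∀ s : σ, (G s).WF)
    (hbip0 : G0.Bipartition V1 V2) (hbips : ∀ s : σ, (G s).Bipartition V1 V2)
    (a : α → ℝ) (aS β b : σ → α → ℝ)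
    (hβ : ∀ s : σ, ∀ v ∈ G0.verts ∩ (G s).verts, 0 ≤ β s v)
    (hb : ∀ s : σ, ∀ v ∈ G0.verts ∩ (G s).verts, 0 ≤ b s v)
    (ε : ℝ)
    (hε : ε = 1 / (1 + ∑ v ∈ G0.verts, |a v|
        + ∑ s : σ, ∑ v ∈ (G s).verts, |aS s v|
        + ∑ s : σ, ∑ v ∈ G0.verts ∩ (G s).verts, (β s v + b s v)))
    (μ : TwoStagePt α σ)
    (hint1 : ∀ v ∈ G0.verts, IntegralReal (μ.1 v))
    (hint2 : ∀ s : σ, ∀ v ∈ (G s).verts, IntegralReal (μ.2.1 s v))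
    (hint3 : ∀ s : σ, ∀ v ∈ G0.verts ∩ (G s).verts,
        IntegralReal (μ.2.2.1 s v) ∧ IntegralReal (μ.2.2.2 s v))
    (hmem : μ ∈ regionD G0 G)
    (hmin : ∀ p ∈ regionD G0 G,
        (∑ v ∈ G0.verts, μ.1 v) + (∑ s : σ, ∑ v ∈ (G s).verts, μ.2.1 s v)
            + ε * objC G0 G a aS β b μ ≤
          (∑ v ∈ G0.verts, p.1 v) + (∑ s : σ, ∑ v ∈ (G s).verts, p.2.1 s v)
            + ε * objC G0 G a aS β b p) :
    (∑ v ∈ G0.verts, μ.1 v = (G0.nu : ℝ)) ∧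
    (∀ s : σ, ∑ v ∈ (G s).verts, μ.2.1 s v = ((G s).nu : ℝ)) ∧
    μ ∈ regionP G0 G ∧
    ∀ p ∈ regionP G0 G, objC G0 G a aS β b μ ≤ objC G0 G a aS β b p := by

  classical
  obtain ⟨hm1, hm2, hm3, hm4⟩ := hmem
  have hmem' : μ ∈ regionD G0 G := ⟨hm1, hm2, hm3, hm4⟩
  -- basic facts about K and ε
  have hKa : (0:ℝ) ≤ ∑ v ∈ G0.verts, |a v| := Finset.sum_nonneg fun v _ => abs_nonneg _
  have hKaS : (0:ℝ) ≤ ∑ s : σ, ∑ v ∈ (G s).verts, |aS s v| :=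
    Finset.sum_nonneg fun s _ => Finset.sum_nonneg fun v _ => abs_nonneg _
  have hKβ : (0:ℝ) ≤ ∑ s : σ, ∑ v ∈ G0.verts ∩ (G s).verts, (β s v + b s v) :=
    Finset.sum_nonneg fun s _ => Finset.sum_nonneg fun v hv =>
      add_nonneg (hβ s v hv) (hb s v hv)
  set K : ℝ := ∑ v ∈ G0.verts, |a v| + ∑ s : σ, ∑ v ∈ (G s).verts, |aS s v|
      + ∑ s : σ, ∑ v ∈ G0.verts ∩ (G s).verts, (β s v + b s v) with hKdef
  have hK0 : 0 ≤ K := by rw [hKdef]; linarith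
  have hεK : ε = 1 / (1 + K) := by rw [hε, hKdef]; ring_nf
  have hεpos : 0 < ε := by rw [hεK]; positivity
  have hεK1 : ε * K < 1 := by
    rw [hεK, div_mul_eq_mul_div, one_mul, div_lt_one (by linarith)]
    linarith
  have haK : ∀ v ∈ G0.verts, |a v| ≤ K := by
    intro v hv
    have h := Finset.single_le_sum (f := fun v => |a v|) (fun i _ => abs_nonneg _) hv
    rw [hKdef]; linarith
  have haSK : ∀ s : σ, ∀ v ∈ (G s).verts, |aS s v| ≤ K := by
    intro s v hv
    have h1 := Finset.single_le_sum (f := fun v => |aS s v|) (fun i _ => abs_nonneg _) hv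
    have h2 := Finset.single_le_sum (f := fun s => ∑ v ∈ (G s).verts, |aS s v|)
      (fun i _ => Finset.sum_nonneg fun v _ => abs_nonneg _) (Finset.mem_univ s)
    rw [hKdef]; linarith
  have hcoef0 : ∀ v ∈ G0.verts, 0 < 1 + ε * a v := by
    intro v hv
    have h1 : |ε * a v| < 1 := by
      rw [abs_mul, abs_of_pos hεpos]
      calc ε * |a v| ≤ ε * K := mul_le_mul_of_nonneg_left (haK v hv) hεpos.le
        _ < 1 := hεK1
    have := abs_lt.mp h1
    linarith
  have hcoefS : ∀ s : σ, ∀ v ∈ (G s).verts, 0 < 1 + ε * aS s v := by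
    intro s v hv
    have h1 : |ε * aS s v| < 1 := by
      rw [abs_mul, abs_of_pos hεpos]
      calc ε * |aS s v| ≤ ε * K := mul_le_mul_of_nonneg_left (haSK s v hv) hεpos.le
        _ < 1 := hεK1
    have := abs_lt.mp h1
    linarith
  -- expansion of the objective
  have hFexp : ∀ p : TwoStagePt α σ,
      (∑ v ∈ G0.verts, p.1 v) + (∑ s : σ, ∑ v ∈ (G s).verts, p.2.1 s v)
          + ε * objC G0 G a aS β b p
        = ∑ v ∈ G0.verts, (1 + ε * a v) * p.1 v
          + ∑ s : σ, ∑ v ∈ (G s).verts, (1 + ε * aS s v) * p.2.1 s v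
          + ε * ∑ s : σ, ∑ v ∈ G0.verts ∩ (G s).verts,
              (β s v * p.2.2.1 s v + b s v * p.2.2.2 s v) := by
    intro p
    simp only [objC, add_mul, one_mul, mul_assoc, mul_add, Finset.sum_add_distrib,
      Finset.mul_sum]
    ring
  -- truncation: the coordinates of μ are at most 1
  have hμ'D : ((fun v => min (μ.1 v) 1, fun s v => min (μ.2.1 s v) 1,
      μ.2.2.1, μ.2.2.2) : TwoStagePt α σ) ∈ regionD G0 G := by
    refine ⟨fun v hv => le_min (hm1 v hv) zero_le_one, ?_, ?_, ?_⟩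
    · intro e he
      exact min1_cover (hm1 _ (hWF0 e he).1) (hm1 _ (hWF0 e he).2.1) (hm2 e he)
    · intro s
      exact ⟨fun v hv => le_min ((hm3 s).1 v hv) zero_le_one,
        fun e he => min1_cover ((hm3 s).1 _ ((hWFs s) e he).1)
          ((hm3 s).1 _ ((hWFs s) e he).2.1) ((hm3 s).2 e he)⟩
    · intro s v hv
      obtain ⟨hδ, hdd, hδ0, hd0⟩ := hm4 s v hv
      exact ⟨min1_lip hδ hδ0, min1_lip hdd hd0, hδ0, hd0⟩
  have hle := hmin _ hμ'D
  rw [hFexp μ, hFexp _] at hle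
  dsimp only at hle
  have hAle : ∑ v ∈ G0.verts, (1 + ε * a v) * min (μ.1 v) 1
      ≤ ∑ v ∈ G0.verts, (1 + ε * a v) * μ.1 v :=
    Finset.sum_le_sum fun v hv =>
      mul_le_mul_of_nonneg_left (min_le_left _ _) (hcoef0 v hv).le
  have hBle : ∑ s : σ, ∑ v ∈ (G s).verts, (1 + ε * aS s v) * min (μ.2.1 s v) 1
      ≤ ∑ s : σ, ∑ v ∈ (G s).verts, (1 + ε * aS s v) * μ.2.1 s v :=
    Finset.sum_le_sum fun s _ => Finset.sum_le_sum fun v hv =>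
      mul_le_mul_of_nonneg_left (min_le_left _ _) (hcoefS s v hv).le
  have hub0 : ∀ v ∈ G0.verts, μ.1 v ≤ 1 := by
    intro v₀ hv₀
    by_contra hc
    push_neg at hc
    have hstrict : ∑ v ∈ G0.verts, (1 + ε * a v) * min (μ.1 v) 1
        < ∑ v ∈ G0.verts, (1 + ε * a v) * μ.1 v := by
      refine Finset.sum_lt_sum
        (fun v hv => mul_le_mul_of_nonneg_left (min_le_left _ _) (hcoef0 v hv).le)
        ⟨v₀, hv₀, ?_⟩
      rw [min_eq_right hc.le]
      exact mul_lt_mul_of_pos_left hc (hcoef0 v₀ hv₀)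
    linarith
  have hubS : ∀ s : σ, ∀ v ∈ (G s).verts, μ.2.1 s v ≤ 1 := by
    intro s₀ v₀ hv₀
    by_contra hc
    push_neg at hc
    have hinner : ∑ v ∈ (G s₀).verts, (1 + ε * aS s₀ v) * min (μ.2.1 s₀ v) 1
        < ∑ v ∈ (G s₀).verts, (1 + ε * aS s₀ v) * μ.2.1 s₀ v := by
      refine Finset.sum_lt_sum
        (fun v hv => mul_le_mul_of_nonneg_left (min_le_left _ _) (hcoefS s₀ v hv).le)
        ⟨v₀, hv₀, ?_⟩
      rw [min_eq_right hc.le]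
      exact mul_lt_mul_of_pos_left hc (hcoefS s₀ v₀ hv₀)
    have hstrict : ∑ s : σ, ∑ v ∈ (G s).verts, (1 + ε * aS s v) * min (μ.2.1 s v) 1
        < ∑ s : σ, ∑ v ∈ (G s).verts, (1 + ε * aS s v) * μ.2.1 s v :=
      Finset.sum_lt_sum
        (fun s _ => Finset.sum_le_sum fun v hv =>
          mul_le_mul_of_nonneg_left (min_le_left _ _) (hcoefS s v hv).le)
        ⟨s₀, Finset.mem_univ s₀, hinner⟩
    linarith
  -- a vertex-cover point of P
  obtain ⟨y0, hy00, hy01, hy0c, hy0sum⟩ := G0.exists_cover_fn hdisj hWF0 hbip0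
  choose yS hyS0 hyS1 hySc hySsum using fun s => (G s).exists_cover_fn hdisj (hWFs s) (hbips s)
  set pstar : TwoStagePt α σ := (y0, yS, fun s v => |y0 v - yS s v|,
    fun s v => |y0 v - yS s v|) with hpstar
  have hpD : pstar ∈ regionD G0 G := by
    refine ⟨fun v _ => hy00 v, hy0c, fun s => ⟨fun v _ => hyS0 s v, hySc s⟩, ?_⟩
    intro s v hv
    refine ⟨?_, ?_, ?_, ?_⟩
    · show y0 v - yS s v ≤ |y0 v - yS s v|
      exact le_abs_self _
    · show yS s v - y0 v ≤ |y0 v - yS s v|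
      rw [abs_sub_comm]; exact le_abs_self _
    · show (0:ℝ) ≤ |y0 v - yS s v|
      exact abs_nonneg _
    · show (0:ℝ) ≤ |y0 v - yS s v|
      exact abs_nonneg _
  -- lower bounds from weak LP duality
  have hlow0 : (G0.nu : ℝ) ≤ ∑ v ∈ G0.verts, μ.1 v := nu_le_sum hWF0 hm1 hm2
  have hlowS : ∀ s : σ, ((G s).nu : ℝ) ≤ ∑ v ∈ (G s).verts, μ.2.1 s v :=
    fun s => nu_le_sum (hWFs s) (hm3 s).1 (hm3 s).2
  -- bound on the objective gap
  have habs0 : ∀ v ∈ G0.verts, |y0 v - μ.1 v| ≤ 1 := by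
    intro v hv
    rw [abs_sub_le_iff]
    constructor
    · linarith [hy01 v, hm1 v hv]
    · linarith [hub0 v hv, hy00 v]
  have habsS : ∀ s : σ, ∀ v ∈ (G s).verts, |yS s v - μ.2.1 s v| ≤ 1 := by
    intro s v hv
    rw [abs_sub_le_iff]
    constructor
    · linarith [hyS1 s v, (hm3 s).1 v hv]
    · linarith [hubS s v hv, hyS0 s v]
  have habsδ : ∀ (s : σ) (v : α), |y0 v - yS s v| ≤ 1 := by
    intro s v
    rw [abs_sub_le_iff]
    constructor
    · linarith [hy01 v, hyS0 s v]
    · linarith [hyS1 s v, hy00 v]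
  have hGdiff : objC G0 G a aS β b pstar - objC G0 G a aS β b μ ≤ K := by
    have h1 : ∑ v ∈ G0.verts, a v * pstar.1 v - ∑ v ∈ G0.verts, a v * μ.1 v
        ≤ ∑ v ∈ G0.verts, |a v| := by
      rw [← Finset.sum_sub_distrib]
      refine Finset.sum_le_sum fun v hv => ?_
      simp only [hpstar]
      calc a v * y0 v - a v * μ.1 v = a v * (y0 v - μ.1 v) := by ring
        _ ≤ |a v * (y0 v - μ.1 v)| := le_abs_self _
        _ = |a v| * |y0 v - μ.1 v| := abs_mul _ _
        _ ≤ |a v| * 1 := mul_le_mul_of_nonneg_left (habs0 v hv) (abs_nonneg _)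
        _ = |a v| := mul_one _
    have h2 : ∑ s : σ, ∑ v ∈ (G s).verts, aS s v * pstar.2.1 s v
          - ∑ s : σ, ∑ v ∈ (G s).verts, aS s v * μ.2.1 s v
        ≤ ∑ s : σ, ∑ v ∈ (G s).verts, |aS s v| := by
      rw [← Finset.sum_sub_distrib]
      refine Finset.sum_le_sum fun s _ => ?_
      rw [← Finset.sum_sub_distrib]
      refine Finset.sum_le_sum fun v hv => ?_
      simp only [hpstar]
      calc aS s v * yS s v - aS s v * μ.2.1 s v = aS s v * (yS s v - μ.2.1 s v) := by ring
        _ ≤ |aS s v * (yS s v - μ.2.1 s v)| := le_abs_self _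
        _ = |aS s v| * |yS s v - μ.2.1 s v| := abs_mul _ _
        _ ≤ |aS s v| * 1 := mul_le_mul_of_nonneg_left (habsS s v hv) (abs_nonneg _)
        _ = |aS s v| := mul_one _
    have h3 : ∑ s : σ, ∑ v ∈ G0.verts ∩ (G s).verts,
            (β s v * pstar.2.2.1 s v + b s v * pstar.2.2.2 s v)
          - ∑ s : σ, ∑ v ∈ G0.verts ∩ (G s).verts,
            (β s v * μ.2.2.1 s v + b s v * μ.2.2.2 s v)
        ≤ ∑ s : σ, ∑ v ∈ G0.verts ∩ (G s).verts, (β s v + b s v) := by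
      rw [← Finset.sum_sub_distrib]
      refine Finset.sum_le_sum fun s _ => ?_
      rw [← Finset.sum_sub_distrib]
      refine Finset.sum_le_sum fun v hv => ?_
      simp only [hpstar]
      obtain ⟨_, _, hδ0, hd0⟩ := hm4 s v hv
      have hb1 : β s v * |y0 v - yS s v| ≤ β s v * 1 :=
        mul_le_mul_of_nonneg_left (habsδ s v) (hβ s v hv)
      have hb2 : b s v * |y0 v - yS s v| ≤ b s v * 1 :=
        mul_le_mul_of_nonneg_left (habsδ s v) (hb s v hv)
      have hb3 : 0 ≤ β s v * μ.2.2.1 s v := mul_nonneg (hβ s v hv) hδ0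
      have hb4 : 0 ≤ b s v * μ.2.2.2 s v := mul_nonneg (hb s v hv) hd0
      nlinarith
    simp only [objC]
    rw [hKdef]
    linarith
  -- the key comparison with pstar
  have hgap := hmin pstar hpD
  have hNp : (∑ v ∈ G0.verts, pstar.1 v) + (∑ s : σ, ∑ v ∈ (G s).verts, pstar.2.1 s v)
      = (G0.nu : ℝ) + ∑ s : σ, ((G s).nu : ℝ) := by
    simp only [hpstar]
    rw [hy0sum]
    congr 1
    exact Finset.sum_congr rfl fun s _ => hySsum s
  have hmul := mul_le_mul_of_nonneg_left hGdiff hεpos.le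
  rw [mul_sub] at hmul
  have hNlt : (∑ v ∈ G0.verts, μ.1 v) + (∑ s : σ, ∑ v ∈ (G s).verts, μ.2.1 s v)
      < (G0.nu : ℝ) + ∑ s : σ, ((G s).nu : ℝ) + 1 := by
    have hmK : ε * K < 1 := hεK1
    linarith [hgap, hNp]
  -- integrality forces equality
  have hintN : IntegralReal ((∑ v ∈ G0.verts, μ.1 v)
      + (∑ s : σ, ∑ v ∈ (G s).verts, μ.2.1 s v)) :=
    (integralSum _ _ hint1).add
      (integralSum Finset.univ _ (fun s _ => integralSum _ _ (hint2 s)))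
  obtain ⟨k, hk⟩ := hintN
  have hmreal : ((G0.nu + ∑ s : σ, (G s).nu : ℕ) : ℝ)
      = (G0.nu : ℝ) + ∑ s : σ, ((G s).nu : ℝ) := by push_cast; ring
  have hge : ((G0.nu + ∑ s : σ, (G s).nu : ℕ) : ℝ) ≤ (k : ℝ) := by
    rw [hmreal, ← hk]
    have := Finset.sum_le_sum (s := Finset.univ) (fun s _ => hlowS s)
    linarith
  have hltk : (k : ℝ) < ((G0.nu + ∑ s : σ, (G s).nu : ℕ) : ℝ) + 1 := by
    rw [hmreal, ← hk] at *
    linarith [hNlt]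
  have hkm : k = (G0.nu + ∑ s : σ, (G s).nu : ℕ) := by
    have h1 : ((G0.nu + ∑ s : σ, (G s).nu : ℕ) : ℤ) ≤ k := by exact_mod_cast hge
    have h2 : k < ((G0.nu + ∑ s : σ, (G s).nu : ℕ) : ℤ) + 1 := by exact_mod_cast hltk
    omega
  have htot : (∑ v ∈ G0.verts, μ.1 v) + (∑ s : σ, ∑ v ∈ (G s).verts, μ.2.1 s v)
      = (G0.nu : ℝ) + ∑ s : σ, ((G s).nu : ℝ) := by
    rw [hk, hkm]; push_cast; ring
  have hsums : ∑ s : σ, ((G s).nu : ℝ) ≤ ∑ s : σ, ∑ v ∈ (G s).verts, μ.2.1 s v :=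
    Finset.sum_le_sum fun s _ => hlowS s
  have heq0 : ∑ v ∈ G0.verts, μ.1 v = (G0.nu : ℝ) := by linarith
  have heqS : ∀ s : σ, ∑ v ∈ (G s).verts, μ.2.1 s v = ((G s).nu : ℝ) := by
    have hzero : ∑ s : σ, (∑ v ∈ (G s).verts, μ.2.1 s v - ((G s).nu : ℝ)) = 0 := by
      rw [Finset.sum_sub_distrib]
      linarith
    intro s₀
    have h := (Finset.sum_eq_zero_iff_of_nonneg
      (fun s _ => by linarith [hlowS s])).mp hzero s₀ (Finset.mem_univ s₀)
    linarith
  have hμP : μ ∈ regionP G0 G := by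
    simp only [regionP, Set.mem_setOf_eq]
    exact ⟨hmem', heq0, heqS⟩
  refine ⟨heq0, heqS, hμP, ?_⟩
  intro p hp
  simp only [regionP, Set.mem_setOf_eq] at hp
  obtain ⟨hpD', hp1, hp2⟩ := hp
  have hm := hmin p hpD'
  have hNp' : (∑ v ∈ G0.verts, p.1 v) + (∑ s : σ, ∑ v ∈ (G s).verts, p.2.1 s v)
      = (G0.nu : ℝ) + ∑ s : σ, ((G s).nu : ℝ) := by
    rw [hp1]
    congr 1
    exact Finset.sum_congr rfl fun s _ => hp2 s
  have : ε * objC G0 G a aS β b μ ≤ ε * objC G0 G a aS β b p := by linarith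
  exact le_of_mul_le_mul_left this hεpos
end

section
/- In the hardness-reduction graph G_0 built from an arbitrary finite graph G, every core element y ∈ core(G_0) satisfies y_{β_1} = y_{β_2} = 0 and y_α = 1. -/
open FinGraph

variable {V : Type*} [Fintype V] [DecidableEq V]

/-- The degree of `v`: the number of edges of `E` containing `v`. -/
def degE (E : Finset (Sym2 V)) (v : V) : ℕ := (E.filter fun e => v ∈ e).card

/-- The vertex universe of the hardness-reduction graph: copies `(v, j)` of original vertices,
edge-vertices, and three extra vertices `α = redAlpha`, `β₁ = redBeta1`, `β₂ = redBeta2`. -/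
abbrev RedVert (V : Type*) : Type _ := (V × ℕ) ⊕ (Sym2 V ⊕ Fin 3)

/-- The copy-vertex `v_j`. -/
def redCopy (v : V) (j : ℕ) : RedVert V := Sum.inl (v, j)

/-- The edge-vertex corresponding to `e`. -/
def redEdgeVert (e : Sym2 V) : RedVert V := Sum.inr (Sum.inl e)

/-- The special vertex `α`. -/
def redAlpha (V : Type*) : RedVert V := Sum.inr (Sum.inr 0)

/-- The special vertex `β₁`. -/
def redBeta1 (V : Type*) : RedVert V := Sum.inr (Sum.inr 1)

/-- The special vertex `β₂`. -/
def redBeta2 (V : Type*) : RedVert V := Sum.inr (Sum.inr 2)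

/-- The hardness-reduction graph `G₀` built from the graph `G = (V, E)`:
vertices are the copies `v_1, …, v_{d_v}` for `v ∈ V`, the edge-vertices `e ∈ E`, and
`α, β₁, β₂`; edges join each edge-vertex `e` to every copy of each endpoint of `e`, and `α`
to every edge-vertex and to `β₁` and `β₂`. -/
def redGraph (E : Finset (Sym2 V)) : FinGraph (RedVert V) where
  verts :=
    (Finset.univ.biUnion fun v : V =>
        (Finset.range (degE E v)).image fun j => redCopy v j)
      ∪ E.image redEdgeVert ∪ {redAlpha V, redBeta1 V, redBeta2 V}
  edges :=
    (E.biUnion fun e =>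
        (Finset.univ.filter fun v : V => v ∈ e).biUnion fun v =>
          (Finset.range (degE E v)).image fun j => (redEdgeVert e, redCopy v j))
      ∪ E.image (fun e => (redAlpha V, redEdgeVert e))
      ∪ {(redAlpha V, redBeta1 V), (redAlpha V, redBeta2 V)}

/-- `Π(S)`: the copies of the vertices of `S`, all edge-vertices, and `α`. -/
def redPi (E : Finset (Sym2 V)) (S : Finset V) : Finset (RedVert V) :=
  (S.biUnion fun v => (Finset.range (degE E v)).image fun j => redCopy v j)
    ∪ E.image redEdgeVert ∪ {redAlpha V}

/-- `S` is a vertex cover of `(V, E)`. -/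
def IsVCover (E : Finset (Sym2 V)) (S : Finset V) : Prop :=
  ∀ e ∈ E, ∃ v ∈ S, v ∈ e
lemma mem_edges_cases (E : Finset (Sym2 V)) {p : RedVert V × RedVert V}
    (hp : p ∈ (redGraph E).edges) :
    (∃ e ∈ E, ∃ v, v ∈ e ∧ ∃ j < degE E v, p = (redEdgeVert e, redCopy v j)) ∨
    (∃ e ∈ E, p = (redAlpha V, redEdgeVert e)) ∨
    p = (redAlpha V, redBeta1 V) ∨ p = (redAlpha V, redBeta2 V) := by
  simp only [redGraph, Finset.mem_union, Finset.mem_biUnion, Finset.mem_image,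
    Finset.mem_filter, Finset.mem_univ, true_and, Finset.mem_range,
    Finset.mem_insert, Finset.mem_singleton] at hp
  rcases hp with ((⟨e, he, v, hv, j, hj, hpe⟩ | ⟨e, he, hpe⟩) | h)
  · exact Or.inl ⟨e, he, v, hv, j, hj, hpe.symm⟩
  · exact Or.inr (Or.inl ⟨e, he, hpe.symm⟩)
  · exact Or.inr (Or.inr h)

lemma alpha_mem_verts (E : Finset (Sym2 V)) : redAlpha V ∈ (redGraph E).verts := by
  simp [redGraph]

lemma beta1_mem_verts (E : Finset (Sym2 V)) : redBeta1 V ∈ (redGraph E).verts := by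
  simp [redGraph]

lemma beta2_mem_verts (E : Finset (Sym2 V)) : redBeta2 V ∈ (redGraph E).verts := by
  simp [redGraph]

lemma edgeVert_mem_verts (E : Finset (Sym2 V)) {e : Sym2 V} (he : e ∈ E) :
    redEdgeVert e ∈ (redGraph E).verts := by
  simp only [redGraph, Finset.mem_union]
  exact Or.inl (Or.inr (Finset.mem_image_of_mem _ he))

lemma copy_mem_verts (E : Finset (Sym2 V)) {v : V} {j : ℕ} (hj : j < degE E v) :
    redCopy v j ∈ (redGraph E).verts := by
  simp only [redGraph, Finset.mem_union]
  exact Or.inl (Or.inl (Finset.mem_biUnion.2 ⟨v, Finset.mem_univ v,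
    Finset.mem_image_of_mem _ (Finset.mem_range.2 hj)⟩))

lemma edges_wf (E : Finset (Sym2 V)) {p : RedVert V × RedVert V}
    (hp : p ∈ (redGraph E).edges) :
    p.1 ∈ (redGraph E).verts ∧ p.2 ∈ (redGraph E).verts ∧ p.1 ≠ p.2 := by
  rcases mem_edges_cases E hp with ⟨e, he, v, hv, j, hj, rfl⟩ | ⟨e, he, rfl⟩ | rfl | rfl
  · exact ⟨edgeVert_mem_verts E he, copy_mem_verts E hj, by simp [redEdgeVert, redCopy]⟩
  · exact ⟨alpha_mem_verts E, edgeVert_mem_verts E he, by simp [redAlpha, redEdgeVert]⟩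
  · exact ⟨alpha_mem_verts E, beta1_mem_verts E, by simp [redAlpha, redBeta1]⟩
  · exact ⟨alpha_mem_verts E, beta2_mem_verts E, by simp [redAlpha, redBeta2]⟩

lemma beta1_edge (E : Finset (Sym2 V)) {p : RedVert V × RedVert V}
    (hp : p ∈ (redGraph E).edges) (h : p.1 = redBeta1 V ∨ p.2 = redBeta1 V) :
    p = (redAlpha V, redBeta1 V) := by
  rcases mem_edges_cases E hp with ⟨e, he, v, hv, j, hj, rfl⟩ | ⟨e, he, rfl⟩ | rfl | rfl <;>
    simp_all [redEdgeVert, redCopy, redAlpha, redBeta1, redBeta2]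

lemma beta2_edge (E : Finset (Sym2 V)) {p : RedVert V × RedVert V}
    (hp : p ∈ (redGraph E).edges) (h : p.1 = redBeta2 V ∨ p.2 = redBeta2 V) :
    p = (redAlpha V, redBeta2 V) := by
  rcases mem_edges_cases E hp with ⟨e, he, v, hv, j, hj, rfl⟩ | ⟨e, he, rfl⟩ | rfl | rfl <;>
    simp_all [redEdgeVert, redCopy, redAlpha, redBeta1, redBeta2]

lemma alpha_not_snd (E : Finset (Sym2 V)) {p : RedVert V × RedVert V}
    (hp : p ∈ (redGraph E).edges) : p.2 ≠ redAlpha V := by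
  rcases mem_edges_cases E hp with ⟨e, he, v, hv, j, hj, rfl⟩ | ⟨e, he, rfl⟩ | rfl | rfl <;>
    simp [redEdgeVert, redCopy, redAlpha, redBeta1, redBeta2]

lemma alphabeta1_mem (E : Finset (Sym2 V)) :
    (redAlpha V, redBeta1 V) ∈ (redGraph E).edges := by
  simp [redGraph]

lemma alphabeta2_mem (E : Finset (Sym2 V)) :
    (redAlpha V, redBeta2 V) ∈ (redGraph E).edges := by
  simp [redGraph]
/-- In the hardness-reduction graph `G₀` built from an arbitrary finite simple
graph `G = (V, E)`, every core element `y ∈ core(G₀)` satisfies `y_{β₁} = y_{β₂} = 0` and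
`y_α = 1`. -/
theorem redGraph_core_values (E : Finset (Sym2 V)) (hE : ∀ e ∈ E, ¬ e.IsDiag)
    (y : RedVert V → ℝ) (hy : y ∈ (redGraph E).core) :
    y (redBeta1 V) = 0 ∧ y (redBeta2 V) = 0 ∧ y (redAlpha V) = 1 := by
  classical
  obtain ⟨hnn, hcov, hsum⟩ := hy
  -- get a maximum matching
  have hne : (((redGraph E).edges.powerset.filter fun M => (redGraph E).IsMatching M)).Nonempty :=
    ⟨∅, Finset.mem_filter.2 ⟨Finset.empty_mem_powerset _, Finset.empty_subset _,
      fun e he => absurd he (Finset.notMem_empty e)⟩⟩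
  obtain ⟨M, hMmem, hMsup⟩ := Finset.exists_mem_eq_sup _ hne Finset.card
  rw [Finset.mem_filter, Finset.mem_powerset] at hMmem
  obtain ⟨hMsub, hMmatch⟩ := hMmem
  have hnuM : (redGraph E).nu = M.card := by
    rw [FinGraph.nu]; convert hMsup using 2
  -- matched vertex set
  set T : Finset (RedVert V) := M.biUnion (fun p => {p.1, p.2}) with hT
  have hTsub : T ⊆ (redGraph E).verts := by
    intro v hv
    obtain ⟨p, hp, hvp⟩ := Finset.mem_biUnion.1 hv
    rcases Finset.mem_insert.1 hvp with rfl | hvp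
    · exact (edges_wf E (hMsub hp)).1
    · rw [Finset.mem_singleton] at hvp; subst hvp
      exact (edges_wf E (hMsub hp)).2.1
  have hdisj : (M : Set (RedVert V × RedVert V)).PairwiseDisjoint
      (fun p : RedVert V × RedVert V => ({p.1, p.2} : Finset (RedVert V))) := by
    intro p hp q hq hpq
    have h4 := hMmatch.2 p hp q hq hpq
    simp only [Finset.disjoint_left, Finset.mem_insert, Finset.mem_singleton]
    rintro a (rfl | rfl) (h | h) <;> simp_all
  have hTsum : ∑ v ∈ T, y v = ∑ p ∈ M, (y p.1 + y p.2) := by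
    rw [hT, Finset.sum_biUnion hdisj]
    refine Finset.sum_congr rfl fun p hp => ?_
    exact Finset.sum_pair (edges_wf E (hMsub hp)).2.2
  have hge : ∀ p ∈ M, (1 : ℝ) ≤ y p.1 + y p.2 := fun p hp => hcov p (hMsub hp)
  have hsdiff : ∑ v ∈ (redGraph E).verts \ T, y v + ∑ v ∈ T, y v
      = ∑ v ∈ (redGraph E).verts, y v := Finset.sum_sdiff hTsub
  have hTge : (M.card : ℝ) ≤ ∑ v ∈ T, y v := by
    rw [hTsum]
    calc (M.card : ℝ) = ∑ _p ∈ M, (1 : ℝ) := by simp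
    _ ≤ _ := Finset.sum_le_sum hge
  have hrestnn : 0 ≤ ∑ v ∈ (redGraph E).verts \ T, y v :=
    Finset.sum_nonneg fun v hv => hnn v (Finset.mem_sdiff.1 hv).1
  have htotal : ∑ v ∈ (redGraph E).verts, y v = (M.card : ℝ) := by
    rw [hsum, hnuM]
  have hrest0 : ∑ v ∈ (redGraph E).verts \ T, y v = 0 := by linarith
  have hTeq : ∑ p ∈ M, (y p.1 + y p.2) = (M.card : ℝ) := by
    rw [← hTsum]; linarith
  -- unmatched vertices have value 0
  have hzero : ∀ v ∈ (redGraph E).verts, v ∉ T → y v = 0 := by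
    intro v hv hvT
    have := (Finset.sum_eq_zero_iff_of_nonneg
      (fun w hw => hnn w (Finset.mem_sdiff.1 hw).1)).1 hrest0
    exact this v (Finset.mem_sdiff.2 ⟨hv, hvT⟩)
  -- matched pairs are tight
  have hpair : ∀ p ∈ M, y p.1 + y p.2 = 1 := by
    intro p hp
    have h0 : ∑ p ∈ M, (y p.1 + y p.2 - 1) = 0 := by
      rw [Finset.sum_sub_distrib, hTeq]; simp
    have := (Finset.sum_eq_zero_iff_of_nonneg
      (fun q hq => by linarith [hge q hq])).1 h0 p hp
    linarith
  -- β₁ and β₂ cannot both be matched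
  have hbmem : ∀ b : RedVert V, b ∈ T → (∀ q ∈ (redGraph E).edges,
      q.1 = b ∨ q.2 = b → q = (redAlpha V, b)) → (redAlpha V, b) ∈ M := by
    intro b hb honly
    obtain ⟨p, hp, hvp⟩ := Finset.mem_biUnion.1 hb
    have : p = (redAlpha V, b) := by
      refine honly p (hMsub hp) ?_
      rcases Finset.mem_insert.1 hvp with rfl | hvp
      · exact Or.inl rfl
      · exact Or.inr (Finset.mem_singleton.1 hvp).symm
    rwa [this] at hp
  have hb1mem : redBeta1 V ∈ T → (redAlpha V, redBeta1 V) ∈ M := fun h =>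
    hbmem _ h fun q hq hc => beta1_edge E hq (by tauto)
  have hb2mem : redBeta2 V ∈ T → (redAlpha V, redBeta2 V) ∈ M := fun h =>
    hbmem _ h fun q hq hc => beta2_edge E hq (by tauto)
  have hnotboth : ¬ (redBeta1 V ∈ T ∧ redBeta2 V ∈ T) := by
    rintro ⟨h1, h2⟩
    have hne12 : ((redAlpha V, redBeta1 V) : RedVert V × RedVert V)
        ≠ (redAlpha V, redBeta2 V) := by simp [redBeta1, redBeta2]
    have := (hMmatch.2 _ (hb1mem h1) _ (hb2mem h2) hne12).1
    simp at this
  -- some β is unmatched, hence y α ≥ 1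
  have halphage : 1 ≤ y (redAlpha V) := by
    rcases not_and_or.1 hnotboth with h | h
    · have h0 := hzero _ (beta1_mem_verts E) h
      have := hcov _ (alphabeta1_mem E)
      simp only at this; linarith
    · have h0 := hzero _ (beta2_mem_verts E) h
      have := hcov _ (alphabeta2_mem E)
      simp only at this; linarith
  -- α is matched
  have halphaT : redAlpha V ∈ T := by
    by_contra h
    have := hzero _ (alpha_mem_verts E) h
    linarith
  obtain ⟨p, hp, hvp⟩ := Finset.mem_biUnion.1 halphaT
  have hp1 : p.1 = redAlpha V := by
    rcases Finset.mem_insert.1 hvp with h | h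
    · exact h.symm
    · exact absurd (Finset.mem_singleton.1 h).symm (alpha_not_snd E (hMsub hp))
  have hp2nn : 0 ≤ y p.2 := hnn _ (edges_wf E (hMsub hp)).2.1
  have halpha : y (redAlpha V) = 1 := by
    have := hpair p hp; rw [hp1] at this; linarith
  refine ⟨?_, ?_, halpha⟩
  · by_cases h : redBeta1 V ∈ T
    · have := hpair _ (hb1mem h); simp only at this; linarith
    · exact hzero _ (beta1_mem_verts E) h
  · by_cases h : redBeta2 V ∈ T
    · have := hpair _ (hb2mem h); simp only at this; linarith
    · exact hzero _ (beta2_mem_verts E) h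
end
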